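/- arXiv:1801.02749 — 5 statements merged into one kernel-verified Lean document; each statement's English description precedes it below -/
import Mathlib

section
/- (Jacobi triple product) Let x, y be complex numbers with 0 < |x| < 1 and y ≠ 0. Then the infinite product ∏_{m=1}^∞ (1 − x^{2m})(1 + x^{2m−1} y)(1 + x^{2m−1} y^{−1}) converges (the family is multipliable) and equals the absolutely convergent sum Σ_{l∈ℤ} x^{l²} y^l. -/
open Finset

/-- Coefficient in the finite Jacobi triple product identity:
`jtpD t N l = ∏_{m=N-l+1}^{N} (1-t^m) * ∏_{m=N+l+1}^{2N} (1-t^m)` for `l ≤ N`, else `0`. -/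
noncomputable def jtpD (t : ℂ) (N l : ℕ) : ℂ :=
  if l ≤ N then (∏ m ∈ Finset.Icc (N - l + 1) N, (1 - t ^ m)) *
      ∏ m ∈ Finset.Icc (N + l + 1) (2 * N), (1 - t ^ m)
  else 0

noncomputable def jtpDz (t : ℂ) (N : ℕ) (l : ℤ) : ℂ := jtpD t N l.natAbs

lemma jtpDz_neg (t : ℂ) (N : ℕ) (l : ℤ) : jtpDz t N (-l) = jtpDz t N l := by
  simp [jtpDz]

lemma jtpD_eq (t : ℂ) (j l : ℕ) :
    jtpD t (j + l) l = (∏ m ∈ Finset.Icc (j + 1) (j + l), (1 - t ^ m)) *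
      ∏ m ∈ Finset.Icc (j + 2 * l + 1) (2 * (j + l)), (1 - t ^ m) := by
  rw [jtpD, if_pos (Nat.le_add_left l j), show j + l - l + 1 = j + 1 from by omega,
    show j + l + l + 1 = j + 2 * l + 1 from by omega]

lemma jtpD_zero_of_lt (t : ℂ) {N l : ℕ} (h : N < l) : jtpD t N l = 0 := by
  rw [jtpD, if_neg (by omega)]

lemma jtpDz_zero_of_lt (t : ℂ) {N : ℕ} {l : ℤ} (h : N < l.natAbs) : jtpDz t N l = 0 :=
  jtpD_zero_of_lt t h

lemma prod_Icc_bot (f : ℕ → ℂ) {a b : ℕ} (h : a ≤ b) :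
    ∏ m ∈ Finset.Icc a b, f m = f a * ∏ m ∈ Finset.Icc (a + 1) b, f m := by
  rw [← Finset.Ico_add_one_right_eq_Icc, ← Finset.Ico_add_one_right_eq_Icc,
    Finset.prod_eq_prod_Ico_succ_bot (by omega)]

lemma jtpD_up (t : ℂ) (j l : ℕ) :
    jtpD t (j + l) (l + 1) * (1 - t ^ (j + 2 * l + 1)) = jtpD t (j + l) l * (1 - t ^ j) := by
  cases j with
  | zero =>
      rw [jtpD_zero_of_lt t (by omega)]
      simp
  | succ j =>
      have h1 : j + 1 + l = j + (l + 1) := by omega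
      rw [show jtpD t (j + 1 + l) (l + 1) = jtpD t (j + (l + 1)) (l + 1) by rw [h1],
        jtpD_eq, jtpD_eq]
      rw [prod_Icc_bot (fun m => 1 - t ^ m) (show j + 1 ≤ j + (l + 1) by omega)]
      rw [prod_Icc_bot (fun m => 1 - t ^ m) (show j + 1 + 2 * l + 1 ≤ 2 * (j + 1 + l) by omega)]
      have e1 : Finset.Icc (j + 1 + 1) (j + (l + 1)) = Finset.Icc (j + 1 + 1) (j + 1 + l) := by
        congr 1; omega
      have e2 : Finset.Icc (j + 2 * (l + 1) + 1) (2 * (j + (l + 1)))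
          = Finset.Icc (j + 1 + 2 * l + 1 + 1) (2 * (j + 1 + l)) := by
        congr 1 <;> omega
      rw [e1, e2]
      have e3 : j + 1 + 2 * l + 1 = j + 2 * (l + 1) := by omega
      rw [e3]
      ring


lemma prod_Icc_top (f : ℕ → ℂ) {a b : ℕ} (h : a ≤ b + 1) :
    ∏ m ∈ Finset.Icc a (b + 1), f m = (∏ m ∈ Finset.Icc a b, f m) * f (b + 1) :=
  Finset.prod_Icc_succ_top h f

/-- `D(N,k-1) * (1 - t^(j+1)) = D(N,k) * (1 - t^(N+k))` with `N = j+k`. -/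
lemma jtpD_down (t : ℂ) (j k : ℕ) :
    jtpDz t (j + k) ((k : ℤ) - 1) * (1 - t ^ (j + 1))
      = jtpD t (j + k) k * (1 - t ^ (j + 2 * k)) := by
  cases k with
  | zero =>
      have h0 : ((0 : ℕ) : ℤ) - 1 = -1 := by norm_num
      have := jtpD_up t j 0
      simp only [Nat.add_zero, Nat.mul_zero] at this ⊢
      rw [h0]
      show jtpD t j ((-1 : ℤ).natAbs) * (1 - t ^ (j + 1)) = jtpD t j 0 * (1 - t ^ (j + 2 * 0))
      have h2 : j + 2 * 0 = j := by omega
      have h3 : j + 2 * 0 + 1 = j + 1 := by omega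
      simpa [h2] using (by simpa using jtpD_up t j 0)
  | succ k =>
      have h1 : ((k : ℤ) + 1) - 1 = (k : ℤ) := by ring
      have h2 : jtpDz t (j + (k + 1)) (((k : ℕ) + 1 : ℤ) - 1) = jtpD t (j + 1 + k) k := by
        rw [show (((k : ℕ) + 1 : ℤ) - 1) = (k : ℤ) from by push_cast; ring]
        show jtpD t (j + (k + 1)) ((k : ℤ)).natAbs = _
        rw [Int.natAbs_natCast]
        congr 1
        omega
      push_cast at h2 ⊢
      rw [h2]
      have := (jtpD_up t (j + 1) k).symm
      rw [show j + 1 + 2 * k + 1 = j + 2 * (k + 1) from by omega] at this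
      rw [show j + (k + 1) = j + 1 + k from by omega]
      exact this

/-- `D(N+1,k) * u * v = D(N,k) * (stuff)` with `N = j + k`. -/
lemma jtpD_succ (t : ℂ) (j k : ℕ) :
    jtpD t (j + k + 1) k * ((1 - t ^ (j + 2 * k + 1)) * (1 - t ^ (j + 1)))
      = jtpD t (j + k) k *
        ((1 - t ^ (2 * (j + k) + 1)) * (1 - t ^ (2 * (j + k) + 2)) * (1 - t ^ (j + k + 1))) := by
  have e1 : j + k + 1 = (j + 1) + k := by omega
  rw [show jtpD t (j + k + 1) k = jtpD t ((j + 1) + k) k from by rw [e1], jtpD_eq, jtpD_eq]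
  -- second factor of D(N+1,k): ∏ Icc (j+2k+2) (2j+2k+2); times (1 - t^(j+2k+1)):
  -- = ∏ Icc (j+2k+1) (2j+2k+2) = (∏ Icc (j+2k+1) (2j+2k)) * (1-t^(2j+2k+1)) * (1-t^(2j+2k+2))
  -- first factor of D(N+1,k): ∏ Icc (j+2) (j+1+k); times (1 - t^(j+1)) = ∏ Icc (j+1) (j+1+k)
  --   = (∏ Icc (j+1) (j+k)) * (1 - t^(j+k+1))
  have hb1 : ∏ m ∈ Finset.Icc (j + 1) (j + 1 + k), (1 - t ^ m)
      = (1 - t ^ (j + 1)) * ∏ m ∈ Finset.Icc (j + 1 + 1) (j + 1 + k), (1 - t ^ m) :=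
    prod_Icc_bot _ (by omega)
  have hb2 : ∏ m ∈ Finset.Icc (j + 1) (j + 1 + k), (1 - t ^ m)
      = (∏ m ∈ Finset.Icc (j + 1) (j + k), (1 - t ^ m)) * (1 - t ^ (j + k + 1)) := by
    rw [show j + 1 + k = (j + k) + 1 from by omega]
    exact prod_Icc_top _ (by omega)
  have hc1 : ∏ m ∈ Finset.Icc (j + 2 * k + 1) (2 * (j + k) + 2), (1 - t ^ m)
      = (1 - t ^ (j + 2 * k + 1)) * ∏ m ∈ Finset.Icc (j + 2 * k + 2) (2 * (j + k) + 2), (1 - t ^ m) :=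
    prod_Icc_bot _ (by omega)
  have hc2 : ∏ m ∈ Finset.Icc (j + 2 * k + 1) (2 * (j + k) + 2), (1 - t ^ m)
      = ((∏ m ∈ Finset.Icc (j + 2 * k + 1) (2 * (j + k)), (1 - t ^ m))
          * (1 - t ^ (2 * (j + k) + 1))) * (1 - t ^ (2 * (j + k) + 2)) := by
    rw [show 2 * (j + k) + 2 = (2 * (j + k) + 1) + 1 from rfl, prod_Icc_top _ (by omega),
      show 2 * (j + k) + 1 = (2 * (j + k)) + 1 from rfl, prod_Icc_top _ (by omega)]
  have e2 : Finset.Icc (j + 1 + 2 * k + 1) (2 * (j + 1 + k))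
      = Finset.Icc (j + 2 * k + 2) (2 * (j + k) + 2) := by congr 1 <;> omega
  rw [e2]
  set P1 := ∏ m ∈ Finset.Icc (j + 1 + 1) (j + 1 + k), (1 - t ^ m) with hP1
  set P2 := ∏ m ∈ Finset.Icc (j + 2 * k + 2) (2 * (j + k) + 2), (1 - t ^ m) with hP2
  set Q1 := ∏ m ∈ Finset.Icc (j + 1) (j + k), (1 - t ^ m) with hQ1
  set Q2 := ∏ m ∈ Finset.Icc (j + 2 * k + 1) (2 * (j + k)), (1 - t ^ m) with hQ2
  -- from hb1,hb2 : (1-t^(j+1)) * P1 = Q1 * (1-t^(j+k+1))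
  -- from hc1,hc2 : (1-t^(j+2k+1)) * P2 = Q2 * (1-t^(2(j+k)+1)) * (1-t^(2(j+k)+2))
  have h1 : (1 - t ^ (j + 1)) * P1 = Q1 * (1 - t ^ (j + k + 1)) := by rw [← hb1, hb2]
  have h2 : (1 - t ^ (j + 2 * k + 1)) * P2
      = Q2 * (1 - t ^ (2 * (j + k) + 1)) * (1 - t ^ (2 * (j + k) + 2)) := by
    rw [← hc1, hc2]
  calc P1 * P2 * ((1 - t ^ (j + 2 * k + 1)) * (1 - t ^ (j + 1)))
      = ((1 - t ^ (j + 1)) * P1) * ((1 - t ^ (j + 2 * k + 1)) * P2) := by ring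
    _ = (Q1 * (1 - t ^ (j + k + 1))) *
          (Q2 * (1 - t ^ (2 * (j + k) + 1)) * (1 - t ^ (2 * (j + k) + 2))) := by rw [h1, h2]
    _ = Q1 * Q2 * ((1 - t ^ (2 * (j + k) + 1)) * (1 - t ^ (2 * (j + k) + 2))
          * (1 - t ^ (j + k + 1))) := by ring


lemma jtpDz_coe (t : ℂ) (N k : ℕ) : jtpDz t N (k : ℤ) = jtpD t N k := by
  simp [jtpDz]

lemma one_sub_pow_ne {t : ℂ} (ht : ‖t‖ < 1) {m : ℕ} (hm : 1 ≤ m) : 1 - t ^ m ≠ 0 := by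
  intro h
  have h1 : t ^ m = 1 := by
    have := sub_eq_zero.mp h
    exact this.symm
  have hn : ‖t‖ ^ m = 1 := by rw [← norm_pow, h1, norm_one]
  have h2 : ‖t‖ ^ m < 1 := pow_lt_one₀ (norm_nonneg t) ht (by omega)
  linarith

lemma jtpDz_rec_nat (t : ℂ) (ht : ‖t‖ < 1) (N k : ℕ) (hk : k ≤ N + 1) :
    jtpDz t (N + 1) (k : ℤ) = (1 - t ^ (N + 1)) *
      (jtpDz t N (k : ℤ) * (1 + t ^ (2 * N + 1))
        + jtpDz t N ((k : ℤ) - 1) * t ^ (N + 1 - k)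
        + jtpDz t N ((k : ℤ) + 1) * t ^ (N + 1 + k)) := by
  rcases Nat.lt_or_ge k (N + 1) with hlt | hge
  · -- k ≤ N
    obtain ⟨j, rfl⟩ : ∃ j, N = j + k := ⟨N - k, by omega⟩
    have hu : (1 - t ^ (j + 2 * k + 1)) ≠ 0 := one_sub_pow_ne ht (by omega)
    have hv : (1 - t ^ (j + 1)) ≠ 0 := one_sub_pow_ne ht (by omega)
    have hkk : jtpDz t (j + k) ((k : ℤ) + 1) = jtpD t (j + k) (k + 1) := by
      rw [show ((k : ℤ) + 1) = ((k + 1 : ℕ) : ℤ) from by push_cast; ring, jtpDz_coe]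
    rw [jtpDz_coe, jtpDz_coe, hkk]
    rw [show j + k + 1 - k = j + 1 from by omega, show j + k + 1 + k = j + 2 * k + 1 from by omega]
    refine mul_right_cancel₀ (mul_ne_zero hu hv) ?_
    have hs := jtpD_succ t j k
    have hup := jtpD_up t j k
    have hdn := jtpD_down t j k
    linear_combination hs
      - (1 - t ^ (j + k + 1)) * t ^ (j + 1) * (1 - t ^ (j + 2 * k + 1)) * hdn
      - (1 - t ^ (j + k + 1)) * t ^ (j + 2 * k + 1) * (1 - t ^ (j + 1)) * hup
  · -- k = N + 1
    have hke : k = N + 1 := by omega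
    subst hke
    have hz1 : jtpDz t N ((N + 1 : ℕ) : ℤ) = 0 := jtpDz_zero_of_lt t (by omega)
    have hz2 : jtpDz t N (((N + 1 : ℕ) : ℤ) + 1) = 0 := jtpDz_zero_of_lt t (by omega)
    have hmid : jtpDz t N (((N + 1 : ℕ) : ℤ) - 1) = jtpD t N N := by
      rw [show (((N + 1 : ℕ) : ℤ) - 1) = ((N : ℕ) : ℤ) from by push_cast; ring, jtpDz_coe]
    rw [jtpDz_coe, hz1, hz2, hmid]
    have hL : jtpD t (N + 1) (N + 1) = ∏ m ∈ Finset.Icc 1 (N + 1), (1 - t ^ m) := by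
      have h := jtpD_eq t 0 (N + 1)
      simp only [Nat.zero_add] at h
      rw [h, Finset.Icc_eq_empty (a := 2 * (N + 1) + 1) (b := 2 * (N + 1)) (by omega),
        Finset.prod_empty, mul_one]
    have hR : jtpD t N N = ∏ m ∈ Finset.Icc 1 N, (1 - t ^ m) := by
      have h := jtpD_eq t 0 N
      simp only [Nat.zero_add] at h
      rw [h, Finset.Icc_eq_empty (a := 2 * N + 1) (b := 2 * N) (by omega),
        Finset.prod_empty, mul_one]
    rw [hL, hR, show N + 1 - (N + 1) = 0 from by omega,
      prod_Icc_top (fun m => 1 - t ^ m) (show 1 ≤ N + 1 from by omega)]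
    ring

lemma jtpDz_rec (t : ℂ) (ht : ‖t‖ < 1) (N : ℕ) (l : ℤ) (hl : l.natAbs ≤ N + 1) :
    jtpDz t (N + 1) l = (1 - t ^ (N + 1)) *
      (jtpDz t N l * (1 + t ^ (2 * N + 1))
        + jtpDz t N (l - 1) * t ^ ((N : ℤ) + 1 - l)
        + jtpDz t N (l + 1) * t ^ ((N : ℤ) + 1 + l)) := by
  rcases le_or_gt 0 l with h0 | h0
  · obtain ⟨k, rfl⟩ : ∃ k : ℕ, l = (k : ℤ) := ⟨l.toNat, by omega⟩
    have hk : k ≤ N + 1 := by omega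
    have h1 : ((N : ℤ) + 1 - k) = ((N + 1 - k : ℕ) : ℤ) := by push_cast [hk]; omega
    have h2 : ((N : ℤ) + 1 + k) = ((N + 1 + k : ℕ) : ℤ) := by push_cast; ring
    rw [h1, h2, zpow_natCast, zpow_natCast]
    exact jtpDz_rec_nat t ht N k hk
  · obtain ⟨k, rfl⟩ : ∃ k : ℕ, l = -(k : ℤ) := ⟨l.natAbs, by omega⟩
    have hk : k ≤ N + 1 := by omega
    have e1 : jtpDz t (N + 1) (-(k : ℤ)) = jtpDz t (N + 1) (k : ℤ) := jtpDz_neg t _ _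
    have e2 : jtpDz t N (-(k : ℤ)) = jtpDz t N (k : ℤ) := jtpDz_neg t _ _
    have e3 : jtpDz t N (-(k : ℤ) - 1) = jtpDz t N ((k : ℤ) + 1) := by
      rw [show (-(k : ℤ) - 1) = -((k : ℤ) + 1) from by ring, jtpDz_neg]
    have e4 : jtpDz t N (-(k : ℤ) + 1) = jtpDz t N ((k : ℤ) - 1) := by
      rw [show (-(k : ℤ) + 1) = -((k : ℤ) - 1) from by ring, jtpDz_neg]
    have h1 : ((N : ℤ) + 1 - -(k : ℤ)) = ((N + 1 + k : ℕ) : ℤ) := by push_cast; ring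
    have h2 : ((N : ℤ) + 1 + -(k : ℤ)) = ((N + 1 - k : ℕ) : ℤ) := by push_cast [hk]; omega
    rw [e1, e2, e3, e4, h1, h2, zpow_natCast, zpow_natCast]
    rw [jtpDz_rec_nat t ht N k hk]
    ring


lemma sq_zpow (x : ℂ) (z : ℤ) : (x ^ 2) ^ z = x ^ (2 * z) := by
  rw [← zpow_natCast x 2, ← zpow_mul]
  norm_num

lemma jtp_shift1 (x y : ℂ) (hx : x ≠ 0) (hy : y ≠ 0) (N : ℕ) (l : ℤ) :
    x ^ ((l + 1) ^ 2) * y ^ (l + 1) * (x ^ 2) ^ ((N : ℤ) - l)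
      = x ^ (l ^ 2) * y ^ l * (x ^ (2 * N + 1) * y) := by
  have h1 : x ^ ((l + 1) ^ 2) * (x ^ 2) ^ ((N : ℤ) - l) = x ^ (l ^ 2) * x ^ (2 * N + 1) := by
    rw [sq_zpow, ← zpow_natCast x (2 * N + 1), ← zpow_add₀ hx, ← zpow_add₀ hx]
    congr 1
    push_cast
    ring
  rw [zpow_add_one₀ hy]
  linear_combination y ^ l * y * h1

lemma jtp_shift2 (x y : ℂ) (hx : x ≠ 0) (hy : y ≠ 0) (N : ℕ) (l : ℤ) :
    x ^ ((l - 1) ^ 2) * y ^ (l - 1) * (x ^ 2) ^ ((N : ℤ) + l)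
      = x ^ (l ^ 2) * y ^ l * (x ^ (2 * N + 1) * y⁻¹) := by
  have h1 : x ^ ((l - 1) ^ 2) * (x ^ 2) ^ ((N : ℤ) + l) = x ^ (l ^ 2) * x ^ (2 * N + 1) := by
    rw [sq_zpow, ← zpow_natCast x (2 * N + 1), ← zpow_add₀ hx, ← zpow_add₀ hx]
    congr 1
    push_cast
    ring
  rw [zpow_sub_one₀ hy]
  linear_combination y ^ l * y⁻¹ * h1

lemma jtp_finite (x y : ℂ) (hx : x ≠ 0) (hx1 : ‖x‖ < 1) (hy : y ≠ 0) (N : ℕ) :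
    ∏ m ∈ Finset.range N,
        ((1 - x ^ (2 * m + 2)) * (1 + x ^ (2 * m + 1) * y) * (1 + x ^ (2 * m + 1) * y⁻¹))
      = ∑ l ∈ Finset.Icc (-(N : ℤ)) (N : ℤ), x ^ (l ^ 2) * y ^ l * jtpDz (x ^ 2) N l := by
  have ht1 : ‖x ^ 2‖ < 1 := by
    rw [norm_pow]
    exact pow_lt_one₀ (norm_nonneg x) hx1 two_ne_zero
  induction N with
  | zero => simp [jtpDz, jtpD]
  | succ N ih =>
      rw [Finset.prod_range_succ, ih]
      push_cast
      set big := Finset.Icc (-((N : ℤ) + 1)) ((N : ℤ) + 1) with hbig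
      set small := Finset.Icc (-(N : ℤ)) ((N : ℤ)) with hsmall
      have hsub : small ⊆ big := Finset.Icc_subset_Icc (by omega) (by omega)
      have hrec : ∀ l ∈ big, x ^ (l ^ 2) * y ^ l * jtpDz (x ^ 2) (N + 1) l
          = x ^ (l ^ 2) * y ^ l * jtpDz (x ^ 2) N l
                * ((1 - (x ^ 2) ^ (N + 1)) * (1 + (x ^ 2) ^ (2 * N + 1)))
            + (1 - (x ^ 2) ^ (N + 1)) * (x ^ (l ^ 2) * y ^ l
                * (jtpDz (x ^ 2) N (l - 1) * (x ^ 2) ^ ((N : ℤ) + 1 - l)))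
            + (1 - (x ^ 2) ^ (N + 1)) * (x ^ (l ^ 2) * y ^ l
                * (jtpDz (x ^ 2) N (l + 1) * (x ^ 2) ^ ((N : ℤ) + 1 + l))) := by
        intro l hl
        rw [hbig, Finset.mem_Icc] at hl
        rw [jtpDz_rec (x ^ 2) ht1 N l (by omega)]
        ring
      have hA : (∑ l ∈ big, x ^ (l ^ 2) * y ^ l * jtpDz (x ^ 2) N l
            * ((1 - (x ^ 2) ^ (N + 1)) * (1 + (x ^ 2) ^ (2 * N + 1))))
          = (∑ l ∈ small, x ^ (l ^ 2) * y ^ l * jtpDz (x ^ 2) N l)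
            * ((1 - (x ^ 2) ^ (N + 1)) * (1 + (x ^ 2) ^ (2 * N + 1))) := by
        rw [Finset.sum_mul]
        refine (Finset.sum_subset hsub ?_).symm
        intro l hl hnl
        rw [hbig, Finset.mem_Icc] at hl
        rw [hsmall, Finset.mem_Icc] at hnl
        rw [jtpDz_zero_of_lt (x ^ 2) (show N < l.natAbs by omega)]
        ring
      have hB : (∑ l ∈ big, (1 - (x ^ 2) ^ (N + 1)) * (x ^ (l ^ 2) * y ^ l
            * (jtpDz (x ^ 2) N (l - 1) * (x ^ 2) ^ ((N : ℤ) + 1 - l))))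
          = (∑ l ∈ small, x ^ (l ^ 2) * y ^ l * jtpDz (x ^ 2) N l)
            * ((1 - (x ^ 2) ^ (N + 1)) * (x ^ (2 * N + 1) * y)) := by
        have step1 : (∑ l ∈ Finset.Icc (-(N : ℤ) + 1) ((N : ℤ) + 1),
              (1 - (x ^ 2) ^ (N + 1)) * (x ^ (l ^ 2) * y ^ l
                * (jtpDz (x ^ 2) N (l - 1) * (x ^ 2) ^ ((N : ℤ) + 1 - l))))
            = ∑ l ∈ big, (1 - (x ^ 2) ^ (N + 1)) * (x ^ (l ^ 2) * y ^ l
                * (jtpDz (x ^ 2) N (l - 1) * (x ^ 2) ^ ((N : ℤ) + 1 - l))) := by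
          refine Finset.sum_subset (hbig ▸ Finset.Icc_subset_Icc (by omega) (by omega)) ?_
          intro l hl hnl
          rw [hbig, Finset.mem_Icc] at hl
          rw [Finset.mem_Icc] at hnl
          rw [jtpDz_zero_of_lt (x ^ 2) (show N < (l - 1).natAbs by omega)]
          ring
        rw [← step1, ← Finset.map_add_right_Icc, Finset.sum_map]
        rw [Finset.sum_mul]
        refine Finset.sum_congr rfl ?_
        intro l hl
        simp only [addRightEmbedding_apply]
        have e1 : l + 1 - 1 = l := by ring
        have e2 : (N : ℤ) + 1 - (l + 1) = (N : ℤ) - l := by ring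
        rw [e1, e2]
        linear_combination (1 - (x ^ 2) ^ (N + 1)) * jtpDz (x ^ 2) N l
          * jtp_shift1 x y hx hy N l
      have hC : (∑ l ∈ big, (1 - (x ^ 2) ^ (N + 1)) * (x ^ (l ^ 2) * y ^ l
            * (jtpDz (x ^ 2) N (l + 1) * (x ^ 2) ^ ((N : ℤ) + 1 + l))))
          = (∑ l ∈ small, x ^ (l ^ 2) * y ^ l * jtpDz (x ^ 2) N l)
            * ((1 - (x ^ 2) ^ (N + 1)) * (x ^ (2 * N + 1) * y⁻¹)) := by
        have step1 : (∑ l ∈ Finset.Icc (-(N : ℤ) + -1) ((N : ℤ) + -1),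
              (1 - (x ^ 2) ^ (N + 1)) * (x ^ (l ^ 2) * y ^ l
                * (jtpDz (x ^ 2) N (l + 1) * (x ^ 2) ^ ((N : ℤ) + 1 + l))))
            = ∑ l ∈ big, (1 - (x ^ 2) ^ (N + 1)) * (x ^ (l ^ 2) * y ^ l
                * (jtpDz (x ^ 2) N (l + 1) * (x ^ 2) ^ ((N : ℤ) + 1 + l))) := by
          refine Finset.sum_subset (hbig ▸ Finset.Icc_subset_Icc (by omega) (by omega)) ?_
          intro l hl hnl
          rw [hbig, Finset.mem_Icc] at hl
          rw [Finset.mem_Icc] at hnl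
          rw [jtpDz_zero_of_lt (x ^ 2) (show N < (l + 1).natAbs by omega)]
          ring
        rw [← step1, ← Finset.map_add_right_Icc, Finset.sum_map]
        rw [Finset.sum_mul]
        refine Finset.sum_congr rfl ?_
        intro l hl
        simp only [addRightEmbedding_apply]
        have e1 : l + -1 + 1 = l := by ring
        have e2 : (N : ℤ) + 1 + (l + -1) = (N : ℤ) + l := by ring
        rw [e1, e2]
        have e3 : l + -1 = l - 1 := by ring
        rw [e3]
        linear_combination (1 - (x ^ 2) ^ (N + 1)) * jtpDz (x ^ 2) N l
          * jtp_shift2 x y hx hy N l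
      have c_eq : (1 - x ^ (2 * N + 2)) * (1 + x ^ (2 * N + 1) * y) * (1 + x ^ (2 * N + 1) * y⁻¹)
          = (1 - (x ^ 2) ^ (N + 1)) * (1 + (x ^ 2) ^ (2 * N + 1))
            + (1 - (x ^ 2) ^ (N + 1)) * (x ^ (2 * N + 1) * y)
            + (1 - (x ^ 2) ^ (N + 1)) * (x ^ (2 * N + 1) * y⁻¹) := by
        have hyy : y * y⁻¹ = 1 := mul_inv_cancel₀ hy
        have h1 : (x ^ 2) ^ (N + 1) = x ^ (2 * N + 2) := by
          rw [show 2 * N + 2 = 2 * (N + 1) from by omega, pow_mul]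
        have h2 : (x ^ 2) ^ (2 * N + 1) = x ^ (2 * N + 1) * x ^ (2 * N + 1) := by
          rw [← pow_add, show 2 * N + 1 + (2 * N + 1) = 2 * (2 * N + 1) from by omega, pow_mul]
        rw [← h1, h2]
        linear_combination (1 - (x ^ 2) ^ (N + 1)) * x ^ (2 * N + 1) * x ^ (2 * N + 1) * hyy
      calc (∑ l ∈ small, x ^ (l ^ 2) * y ^ l * jtpDz (x ^ 2) N l) *
              ((1 - x ^ (2 * N + 2)) * (1 + x ^ (2 * N + 1) * y) * (1 + x ^ (2 * N + 1) * y⁻¹))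
          = (∑ l ∈ small, x ^ (l ^ 2) * y ^ l * jtpDz (x ^ 2) N l)
              * ((1 - (x ^ 2) ^ (N + 1)) * (1 + (x ^ 2) ^ (2 * N + 1)))
            + (∑ l ∈ small, x ^ (l ^ 2) * y ^ l * jtpDz (x ^ 2) N l)
              * ((1 - (x ^ 2) ^ (N + 1)) * (x ^ (2 * N + 1) * y))
            + (∑ l ∈ small, x ^ (l ^ 2) * y ^ l * jtpDz (x ^ 2) N l)
              * ((1 - (x ^ 2) ^ (N + 1)) * (x ^ (2 * N + 1) * y⁻¹)) := by
            rw [c_eq]; ring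
        _ = ∑ l ∈ big, (x ^ (l ^ 2) * y ^ l * jtpDz (x ^ 2) N l
                * ((1 - (x ^ 2) ^ (N + 1)) * (1 + (x ^ 2) ^ (2 * N + 1)))
              + (1 - (x ^ 2) ^ (N + 1)) * (x ^ (l ^ 2) * y ^ l
                  * (jtpDz (x ^ 2) N (l - 1) * (x ^ 2) ^ ((N : ℤ) + 1 - l)))
              + (1 - (x ^ 2) ^ (N + 1)) * (x ^ (l ^ 2) * y ^ l
                  * (jtpDz (x ^ 2) N (l + 1) * (x ^ 2) ^ ((N : ℤ) + 1 + l)))) := by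
            rw [Finset.sum_add_distrib, Finset.sum_add_distrib, hA, hB, hC]
        _ = ∑ l ∈ big, x ^ (l ^ 2) * y ^ l * jtpDz (x ^ 2) (N + 1) l :=
            (Finset.sum_congr rfl hrec).symm


open Filter Topology

lemma norm_prod_one_add_sub_one_le (s : Finset ℕ) (f : ℕ → ℂ) :
    ‖(∏ i ∈ s, (1 + f i)) - 1‖ ≤ (∏ i ∈ s, (1 + ‖f i‖)) - 1 := by
  induction s using Finset.cons_induction with
  | empty => simp
  | cons a s ha ih =>
      rw [Finset.prod_cons, Finset.prod_cons]
      have h1 : (1 + f a) * ∏ i ∈ s, (1 + f i) - 1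
          = ((∏ i ∈ s, (1 + f i)) - 1) * (1 + f a) + f a := by ring
      rw [h1]
      have h2 : ‖((∏ i ∈ s, (1 + f i)) - 1) * (1 + f a) + f a‖
          ≤ ‖(∏ i ∈ s, (1 + f i)) - 1‖ * ‖1 + f a‖ + ‖f a‖ := by
        refine (norm_add_le _ _).trans ?_
        rw [norm_mul]
      refine h2.trans ?_
      have h3 : ‖(1 : ℂ) + f a‖ ≤ 1 + ‖f a‖ := (norm_add_le _ _).trans (by simp)
      have h4 : (0:ℝ) ≤ ‖(∏ i ∈ s, (1 + f i)) - 1‖ := norm_nonneg _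
      have h5 : (1:ℝ) ≤ ∏ i ∈ s, (1 + ‖f i‖) := by
        calc (1:ℝ) = ∏ _i ∈ s, 1 := Finset.prod_const_one.symm
          _ ≤ ∏ i ∈ s, (1 + ‖f i‖) := Finset.prod_le_prod (fun i _ => zero_le_one)
              (fun i _ => by linarith [norm_nonneg (f i)])
      nlinarith [norm_nonneg (f a), norm_nonneg ((∏ i ∈ s, (1 + f i)) - 1)]

lemma prod_one_add_le_exp (s : Finset ℕ) (g : ℕ → ℝ) (hg : ∀ i, 0 ≤ g i) :
    ∏ i ∈ s, (1 + g i) ≤ Real.exp (∑ i ∈ s, g i) := by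
  rw [Real.exp_sum]
  refine Finset.prod_le_prod (fun i _ => by linarith [hg i]) (fun i _ => ?_)
  have := Real.add_one_le_exp (g i)
  linarith

lemma geom_Icc_le {r : ℝ} (h0 : 0 ≤ r) (h1 : r < 1) (a b : ℕ) :
    ∑ m ∈ Finset.Icc a b, r ^ m ≤ r ^ a * (1 - r)⁻¹ := by
  have key : ∀ m ∈ Finset.Icc a b, r ^ m ≤ r ^ a * r ^ (m - a) := by
    intro m hm
    rw [Finset.mem_Icc] at hm
    rw [← pow_add, show a + (m - a) = m from by omega]
  calc ∑ m ∈ Finset.Icc a b, r ^ m ≤ ∑ m ∈ Finset.Icc a b, r ^ a * r ^ (m - a) :=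
        Finset.sum_le_sum key
    _ = r ^ a * ∑ m ∈ Finset.Icc a b, r ^ (m - a) := by rw [Finset.mul_sum]
    _ ≤ r ^ a * (1 - r)⁻¹ := by
        refine mul_le_mul_of_nonneg_left ?_ (pow_nonneg h0 a)
        have hinj : ∀ m₁ ∈ Finset.Icc a b, ∀ m₂ ∈ Finset.Icc a b,
            m₁ - a = m₂ - a → m₁ = m₂ := by
          intro m₁ h₁ m₂ h₂ h
          rw [Finset.mem_Icc] at h₁ h₂
          omega
        calc ∑ m ∈ Finset.Icc a b, r ^ (m - a)
            = ∑ i ∈ (Finset.Icc a b).image (fun m => m - a), r ^ i :=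
              (Finset.sum_image hinj).symm
          _ ≤ ∑' i : ℕ, r ^ i := (summable_geometric_of_lt_one h0 h1).sum_le_tsum _
              (fun i _ => pow_nonneg h0 i)
          _ = (1 - r)⁻¹ := tsum_geometric_of_lt_one h0 h1

/-- norm bound for a product `∏ (1 - t^m)` over an interval of indices `≥ a ≥ 1`. -/
lemma jtp_prod_bound (t : ℂ) (h1 : ‖t‖ < 1) (a b : ℕ) :
    ‖∏ m ∈ Finset.Icc a b, (1 - t ^ m)‖ ≤ Real.exp (‖t‖ ^ a * (1 - ‖t‖)⁻¹) := by
  have e : ∀ m, (1 : ℂ) - t ^ m = 1 + (-(t ^ m)) := fun m => by ring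
  calc ‖∏ m ∈ Finset.Icc a b, (1 - t ^ m)‖
      = ∏ m ∈ Finset.Icc a b, ‖(1 : ℂ) - t ^ m‖ := norm_prod _ _
    _ ≤ ∏ m ∈ Finset.Icc a b, (1 + ‖t‖ ^ m) := by
        refine Finset.prod_le_prod (fun i _ => norm_nonneg _) (fun i _ => ?_)
        rw [e i]
        refine (norm_add_le _ _).trans ?_
        simp [norm_pow]
    _ ≤ Real.exp (∑ m ∈ Finset.Icc a b, ‖t‖ ^ m) :=
        prod_one_add_le_exp _ _ (fun i => pow_nonneg (norm_nonneg t) i)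
    _ ≤ Real.exp (‖t‖ ^ a * (1 - ‖t‖)⁻¹) :=
        Real.exp_le_exp.mpr (geom_Icc_le (norm_nonneg t) h1 a b)

lemma jtp_prod_sub_one_bound (t : ℂ) (h1 : ‖t‖ < 1) (a b : ℕ) :
    ‖(∏ m ∈ Finset.Icc a b, (1 - t ^ m)) - 1‖
      ≤ Real.exp (‖t‖ ^ a * (1 - ‖t‖)⁻¹) - 1 := by
  have e : (fun m => (1 : ℂ) - t ^ m) = fun m => 1 + (-(t ^ m)) := by
    funext m; ring
  calc ‖(∏ m ∈ Finset.Icc a b, (1 - t ^ m)) - 1‖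
      = ‖(∏ m ∈ Finset.Icc a b, (1 + (-(t ^ m)))) - 1‖ := by rw [← e]
    _ ≤ (∏ m ∈ Finset.Icc a b, (1 + ‖-(t ^ m)‖)) - 1 :=
        norm_prod_one_add_sub_one_le _ _
    _ ≤ Real.exp (‖t‖ ^ a * (1 - ‖t‖)⁻¹) - 1 := by
        have : ∏ m ∈ Finset.Icc a b, (1 + ‖-(t ^ m)‖)
            = ∏ m ∈ Finset.Icc a b, (1 + ‖t‖ ^ m) := by
          refine Finset.prod_congr rfl (fun m _ => ?_)
          rw [norm_neg, norm_pow]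
        rw [this]
        have h2 := prod_one_add_le_exp (Finset.Icc a b) (fun m => ‖t‖ ^ m)
          (fun i => pow_nonneg (norm_nonneg t) i)
        have h3 := Real.exp_le_exp.mpr (geom_Icc_le (norm_nonneg t) h1 a b)
        linarith

lemma jtpD_norm_le (t : ℂ) (h1 : ‖t‖ < 1) (N l : ℕ) :
    ‖jtpD t N l‖ ≤ Real.exp ((1 - ‖t‖)⁻¹) * Real.exp ((1 - ‖t‖)⁻¹) := by
  have hexp : (0:ℝ) < Real.exp ((1 - ‖t‖)⁻¹) := Real.exp_pos _
  rw [jtpD]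
  split
  · rw [norm_mul]
    have key : ∀ a b : ℕ, ‖∏ m ∈ Finset.Icc a b, (1 - t ^ m)‖ ≤ Real.exp ((1 - ‖t‖)⁻¹) := by
      intro a b
      refine (jtp_prod_bound t h1 a b).trans (Real.exp_le_exp.mpr ?_)
      have ha : ‖t‖ ^ a ≤ 1 := pow_le_one₀ (norm_nonneg t) h1.le
      have hpos : (0:ℝ) ≤ (1 - ‖t‖)⁻¹ := by
        have : (0:ℝ) < 1 - ‖t‖ := by linarith
        positivity
      nlinarith [pow_nonneg (norm_nonneg t) a]
    exact mul_le_mul (key _ _) (key _ _) (norm_nonneg _) hexp.le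
  · rw [norm_zero]
    positivity

lemma jtpDz_tendsto (t : ℂ) (h1 : ‖t‖ < 1) (l : ℤ) :
    Tendsto (fun N => jtpDz t N l) atTop (𝓝 1) := by
  set k := l.natAbs with hk
  set r := ‖t‖ with hr
  have hr0 : 0 ≤ r := norm_nonneg t
  have hc : (0:ℝ) ≤ (1 - r)⁻¹ := by
    have : (0:ℝ) < 1 - r := by linarith
    positivity
  -- the dominating sequence
  have hg : Tendsto (fun N : ℕ =>
      (Real.exp ((1 - r)⁻¹) + 1) * (Real.exp (r ^ (N - k + 1) * (1 - r)⁻¹) - 1))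
      atTop (𝓝 0) := by
    have h₁ : Tendsto (fun N : ℕ => N - k + 1) atTop atTop := by
      refine tendsto_atTop_atTop_of_monotone (fun m n h => by omega) (fun b => ⟨b + k, by omega⟩)
    have h₂ : Tendsto (fun N : ℕ => r ^ (N - k + 1)) atTop (𝓝 0) :=
      (tendsto_pow_atTop_nhds_zero_of_lt_one hr0 h1).comp h₁
    have h₃ : Tendsto (fun N : ℕ => r ^ (N - k + 1) * (1 - r)⁻¹) atTop (𝓝 0) := by
      simpa using h₂.mul_const ((1 - r)⁻¹)
    have h₄ : Tendsto (fun N : ℕ => Real.exp (r ^ (N - k + 1) * (1 - r)⁻¹) - 1)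
        atTop (𝓝 0) := by
      have := (Real.continuous_exp.tendsto 0).comp h₃
      rw [Real.exp_zero] at this
      simpa using this.sub_const 1
    simpa using h₄.const_mul (Real.exp ((1 - r)⁻¹) + 1)
  have hbound : ∀ᶠ N in atTop, ‖jtpDz t N l - 1‖
      ≤ (Real.exp ((1 - r)⁻¹) + 1) * (Real.exp (r ^ (N - k + 1) * (1 - r)⁻¹) - 1) := by
    filter_upwards [eventually_ge_atTop k] with N hN
    have hDz : jtpDz t N l = (∏ m ∈ Finset.Icc (N - k + 1) N, (1 - t ^ m)) *
        ∏ m ∈ Finset.Icc (N + k + 1) (2 * N), (1 - t ^ m) := by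
      rw [jtpDz, ← hk, jtpD, if_pos hN]
    set P := ∏ m ∈ Finset.Icc (N - k + 1) N, (1 - t ^ m) with hP
    set Q := ∏ m ∈ Finset.Icc (N + k + 1) (2 * N), (1 - t ^ m) with hQ
    have e : P * Q - 1 = P * (Q - 1) + (P - 1) := by ring
    have hPn : ‖P‖ ≤ Real.exp ((1 - r)⁻¹) := by
      refine (jtp_prod_bound t h1 _ _).trans (Real.exp_le_exp.mpr ?_)
      have ha : r ^ (N - k + 1) ≤ 1 := pow_le_one₀ hr0 h1.le
      nlinarith [pow_nonneg hr0 (N - k + 1)]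
    have hQ1 : ‖Q - 1‖ ≤ Real.exp (r ^ (N - k + 1) * (1 - r)⁻¹) - 1 := by
      refine (jtp_prod_sub_one_bound t h1 _ _).trans ?_
      have : r ^ (N + k + 1) ≤ r ^ (N - k + 1) :=
        pow_le_pow_of_le_one hr0 h1.le (by omega)
      have := mul_le_mul_of_nonneg_right this hc
      exact sub_le_sub_right (Real.exp_le_exp.mpr this) 1
    have hP1 : ‖P - 1‖ ≤ Real.exp (r ^ (N - k + 1) * (1 - r)⁻¹) - 1 :=
      jtp_prod_sub_one_bound t h1 _ _
    calc ‖jtpDz t N l - 1‖ = ‖P * (Q - 1) + (P - 1)‖ := by rw [hDz, e]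
      _ ≤ ‖P‖ * ‖Q - 1‖ + ‖P - 1‖ := by
          refine (norm_add_le _ _).trans ?_
          rw [norm_mul]
      _ ≤ (Real.exp ((1 - r)⁻¹) + 1) * (Real.exp (r ^ (N - k + 1) * (1 - r)⁻¹) - 1) := by
          have hQ1' : (0:ℝ) ≤ Real.exp (r ^ (N - k + 1) * (1 - r)⁻¹) - 1 := by
            have : (0:ℝ) ≤ r ^ (N - k + 1) * (1 - r)⁻¹ :=
              mul_nonneg (pow_nonneg hr0 _) hc
            have := Real.one_le_exp this
            linarith
          nlinarith [norm_nonneg P, norm_nonneg (Q - 1), norm_nonneg (P - 1),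
            Real.exp_pos ((1 - r)⁻¹)]
  have hz : Tendsto (fun N => jtpDz t N l - 1) atTop (𝓝 0) :=
    squeeze_zero_norm' hbound hg
  have := hz.add_const 1
  simpa using this


lemma theta_summable_nat (x z : ℂ) (hx1 : ‖x‖ < 1) :
    Summable (fun n : ℕ => ‖x ^ ((n : ℤ) ^ 2) * z ^ (n : ℤ)‖) := by
  have key : ∀ n : ℕ, ‖x ^ ((n : ℤ) ^ 2) * z ^ (n : ℤ)‖ = ‖x‖ ^ (n ^ 2) * ‖z‖ ^ n := by
    intro n
    rw [show ((n : ℤ) ^ 2) = ((n ^ 2 : ℕ) : ℤ) from by push_cast; ring, zpow_natCast,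
      zpow_natCast, norm_mul, norm_pow, norm_pow]
  have hev : ∀ᶠ n in atTop, ‖x‖ ^ (n ^ 2) * ‖z‖ ^ n ≤ (1 / 2) ^ n := by
    have h0 : Tendsto (fun n : ℕ => ‖x‖ ^ n * ‖z‖) atTop (𝓝 0) := by
      simpa using (tendsto_pow_atTop_nhds_zero_of_lt_one (norm_nonneg x) hx1).mul_const ‖z‖
    filter_upwards [h0.eventually_le_const (show (0:ℝ) < 1/2 by norm_num)] with n hn
    have h1 : ‖x‖ ^ (n ^ 2) ≤ (‖x‖ ^ n) ^ n := by
      rw [← pow_mul, pow_two]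
    have h2 : ‖x‖ ^ (n ^ 2) * ‖z‖ ^ n ≤ (‖x‖ ^ n * ‖z‖) ^ n := by
      rw [mul_pow]
      exact mul_le_mul_of_nonneg_right h1 (pow_nonneg (norm_nonneg z) n)
    refine h2.trans ?_
    exact pow_le_pow_left₀ (mul_nonneg (pow_nonneg (norm_nonneg x) n) (norm_nonneg z)) hn n
  refine Summable.of_norm_bounded_eventually (g := fun n : ℕ => (1 / 2 : ℝ) ^ n)
    (summable_geometric_of_lt_one (by norm_num) (by norm_num)) ?_
  rw [Nat.cofinite_eq_atTop]
  filter_upwards [hev] with n hn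
  rw [Real.norm_eq_abs, abs_of_nonneg (norm_nonneg _), key n]
  exact hn

lemma theta_summable (x y : ℂ) (hx1 : ‖x‖ < 1) (hy : y ≠ 0) :
    Summable (fun l : ℤ => ‖x ^ (l ^ 2) * y ^ l‖) := by
  refine Summable.of_nat_of_neg ?_ ?_
  · exact theta_summable_nat x y hx1
  · have := theta_summable_nat x y⁻¹ hx1
    refine this.congr fun n => ?_
    rw [inv_zpow, ← zpow_neg, show (-(n : ℤ)) ^ 2 = (n : ℤ) ^ 2 from by ring]

lemma three_factor_bound (u v w : ℂ) :
    ‖(1 + u) * (1 + v) * (1 + w) - 1‖ ≤ (1 + ‖u‖) * (1 + ‖v‖) * (1 + ‖w‖) - 1 := by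
  have h2 : ‖(1 + u) * (1 + v) - 1‖ ≤ (1 + ‖u‖) * (1 + ‖v‖) - 1 := by
    have e : (1 + u) * (1 + v) - 1 = u + v + u * v := by ring
    rw [e]
    calc ‖u + v + u * v‖ ≤ ‖u + v‖ + ‖u * v‖ := norm_add_le _ _
      _ ≤ ‖u‖ + ‖v‖ + ‖u‖ * ‖v‖ := by
          rw [norm_mul]
          have := norm_add_le u v
          linarith
      _ = (1 + ‖u‖) * (1 + ‖v‖) - 1 := by ring
  have e : (1 + u) * (1 + v) * (1 + w) - 1 = ((1 + u) * (1 + v) - 1) * (1 + w) + w := by ring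
  rw [e]
  have h3 : ‖(1 : ℂ) + w‖ ≤ 1 + ‖w‖ := (norm_add_le _ _).trans (by simp)
  calc ‖((1 + u) * (1 + v) - 1) * (1 + w) + w‖
      ≤ ‖(1 + u) * (1 + v) - 1‖ * ‖1 + w‖ + ‖w‖ := by
        refine (norm_add_le _ _).trans ?_
        rw [norm_mul]
    _ ≤ (1 + ‖u‖) * (1 + ‖v‖) * (1 + ‖w‖) - 1 := by
        nlinarith [norm_nonneg ((1 + u) * (1 + v) - 1), norm_nonneg w, norm_nonneg u,
          norm_nonneg v, norm_nonneg (1 + w)]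

lemma jtp_factor_sub_one_bound (x y : ℂ) (hx1 : ‖x‖ < 1) (hy : y ≠ 0) (m : ℕ) :
    ‖(1 - x ^ (2 * m + 2)) * (1 + x ^ (2 * m + 1) * y) * (1 + x ^ (2 * m + 1) * y⁻¹) - 1‖
      ≤ ((1 + 1) * (1 + ‖y‖) * (1 + ‖y⁻¹‖)) * ‖x‖ ^ m := by
  set r := ‖x‖ with hr
  have hr0 : 0 ≤ r := norm_nonneg x
  have h := three_factor_bound (-(x ^ (2 * m + 2))) (x ^ (2 * m + 1) * y) (x ^ (2 * m + 1) * y⁻¹)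
  have e : (1 : ℂ) - x ^ (2 * m + 2) = 1 + (-(x ^ (2 * m + 2))) := by ring
  rw [e]
  refine h.trans ?_
  have hu : ‖-(x ^ (2 * m + 2))‖ = r ^ (2 * m + 2) := by rw [norm_neg, norm_pow]
  have hv : ‖x ^ (2 * m + 1) * y‖ = r ^ (2 * m + 1) * ‖y‖ := by rw [norm_mul, norm_pow]
  have hw : ‖x ^ (2 * m + 1) * y⁻¹‖ = r ^ (2 * m + 1) * ‖y⁻¹‖ := by rw [norm_mul, norm_pow]
  rw [hu, hv, hw]
  have hm1 : r ^ (2 * m + 2) ≤ r ^ m := pow_le_pow_of_le_one hr0 hx1.le (by omega)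
  have hm2 : r ^ (2 * m + 1) ≤ r ^ m := pow_le_pow_of_le_one hr0 hx1.le (by omega)
  have hrm1 : r ^ m ≤ 1 := pow_le_one₀ hr0 hx1.le
  have hrm0 : 0 ≤ r ^ m := pow_nonneg hr0 m
  have hy0 : 0 ≤ ‖y‖ := norm_nonneg y
  have hy0' : 0 ≤ ‖y⁻¹‖ := norm_nonneg y⁻¹
  have q1 : r ^ (2 * m + 2) * r ^ (2 * m + 1) ≤ r ^ m := by
    rw [← pow_add]
    exact pow_le_pow_of_le_one hr0 hx1.le (by omega)
  have q2 : r ^ (2 * m + 1) * r ^ (2 * m + 1) ≤ r ^ m := by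
    rw [← pow_add]
    exact pow_le_pow_of_le_one hr0 hx1.le (by omega)
  have q3 : r ^ (2 * m + 2) * (r ^ (2 * m + 1) * r ^ (2 * m + 1)) ≤ r ^ m := by
    rw [← pow_add, ← pow_add]
    exact pow_le_pow_of_le_one hr0 hx1.le (by omega)
  nlinarith [hm1, mul_le_mul_of_nonneg_right hm2 hy0, mul_le_mul_of_nonneg_right hm2 hy0',
    mul_le_mul_of_nonneg_right q1 hy0, mul_le_mul_of_nonneg_right q1 hy0',
    mul_le_mul_of_nonneg_right q2 (mul_nonneg hy0 hy0'),
    mul_le_mul_of_nonneg_right q3 (mul_nonneg hy0 hy0'), hrm0]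


lemma jtp_multipliable (x y : ℂ) (hx1 : ‖x‖ < 1) (hy : y ≠ 0) :
    Multipliable (fun m : ℕ =>
      (1 - x ^ (2 * m + 2)) * (1 + x ^ (2 * m + 1) * y) * (1 + x ^ (2 * m + 1) * y⁻¹)) := by
  set F := fun m : ℕ =>
    (1 - x ^ (2 * m + 2)) * (1 + x ^ (2 * m + 1) * y) * (1 + x ^ (2 * m + 1) * y⁻¹) with hF
  by_cases hzero : ∀ m, F m ≠ 0
  · -- all factors nonzero : use log summability
    have hlog : Summable (fun m => Complex.log (F m)) := by
      set B := ((1 : ℝ) + 1) * (1 + ‖y‖) * (1 + ‖y⁻¹‖) with hB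
      have hb : ∀ m, ‖F m - 1‖ ≤ B * ‖x‖ ^ m := jtp_factor_sub_one_bound x y hx1 hy
      have hsum : Summable (fun m : ℕ => B * ‖x‖ ^ m) :=
        (summable_geometric_of_lt_one (norm_nonneg x) hx1).mul_left B
      refine Summable.of_norm_bounded_eventually (g := fun m => (3 / 2) * (B * ‖x‖ ^ m))
        (hsum.mul_left (3 / 2)) ?_
      rw [Nat.cofinite_eq_atTop]
      have h0 : Tendsto (fun m : ℕ => B * ‖x‖ ^ m) atTop (𝓝 0) := by
        simpa using (tendsto_pow_atTop_nhds_zero_of_lt_one (norm_nonneg x) hx1).const_mul B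
      have hev : ∀ᶠ m in atTop, ‖F m - 1‖ ≤ 1 / 2 := by
        filter_upwards [h0.eventually_le_const (show (0:ℝ) < 1 / 2 by norm_num)] with m hm
        exact (hb m).trans hm
      filter_upwards [hev] with m hm
      have e : Complex.log (F m) = Complex.log (1 + (F m - 1)) := by rw [add_sub_cancel]
      rw [e]
      refine (Complex.norm_log_one_add_half_le_self hm).trans ?_
      have := hb m
      linarith
    exact Complex.multipliable_of_summable_log hlog
  · -- some factor vanishes : the product converges to 0
    push_neg at hzero
    obtain ⟨m₀, h0⟩ := hzero
    refine ⟨0, ?_⟩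
    have heq : (fun _ : Finset ℕ => (0 : ℂ)) =ᶠ[atTop] (fun s : Finset ℕ => ∏ i ∈ s, F i) := by
      filter_upwards [eventually_ge_atTop ({m₀} : Finset ℕ)] with s hs
      exact (Finset.prod_eq_zero (hs (Finset.mem_singleton_self m₀)) h0).symm
    exact Filter.Tendsto.congr' heq tendsto_const_nhds

lemma jtp_sum_tendsto (x y : ℂ) (hx : x ≠ 0) (hx1 : ‖x‖ < 1) (hy : y ≠ 0) :
    Tendsto (fun N : ℕ => ∑ l ∈ Finset.Icc (-(N : ℤ)) (N : ℤ),
        x ^ (l ^ 2) * y ^ l * jtpDz (x ^ 2) N l)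
      atTop (𝓝 (∑' l : ℤ, x ^ (l ^ 2) * y ^ l)) := by
  have ht1 : ‖x ^ 2‖ < 1 := by
    rw [norm_pow]
    exact pow_lt_one₀ (norm_nonneg x) hx1 two_ne_zero
  set C := Real.exp ((1 - ‖x ^ 2‖)⁻¹) * Real.exp ((1 - ‖x ^ 2‖)⁻¹) with hC
  set f : ℕ → ℤ → ℂ := fun N l =>
    if l ∈ Finset.Icc (-(N : ℤ)) (N : ℤ) then x ^ (l ^ 2) * y ^ l * jtpDz (x ^ 2) N l else 0
    with hf
  have key : Tendsto (fun N => ∑' l : ℤ, f N l) atTop (𝓝 (∑' l : ℤ, x ^ (l ^ 2) * y ^ l)) := by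
    apply tendsto_tsum_of_dominated_convergence
      (bound := fun l : ℤ => C * ‖x ^ (l ^ 2) * y ^ l‖)
    · exact (theta_summable x y hx1 hy).mul_left C
    · intro l
      have hDz := jtpDz_tendsto (x ^ 2) ht1 l
      have h1 : Tendsto (fun N => x ^ (l ^ 2) * y ^ l * jtpDz (x ^ 2) N l) atTop
          (𝓝 (x ^ (l ^ 2) * y ^ l)) := by
        simpa using hDz.const_mul (x ^ (l ^ 2) * y ^ l)
      refine Filter.Tendsto.congr' ?_ h1
      filter_upwards [eventually_ge_atTop l.natAbs] with N hN
      rw [hf]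
      simp only
      rw [if_pos (Finset.mem_Icc.mpr (by omega))]
    · refine Filter.Eventually.of_forall (fun N l => ?_)
      rw [hf]
      simp only
      split
      · rw [norm_mul, mul_comm C _]
        exact mul_le_mul_of_nonneg_left (jtpD_norm_le (x ^ 2) ht1 N l.natAbs) (norm_nonneg _)
      · rw [norm_zero]
        positivity
  refine key.congr (fun N => ?_)
  rw [tsum_eq_sum (s := Finset.Icc (-(N : ℤ)) (N : ℤ))
    (fun l hl => by rw [hf]; simp only; rw [if_neg hl])]
  exact Finset.sum_congr rfl (fun l hl => by rw [hf]; simp only; rw [if_pos hl])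

/-- Jacobi triple product: for `0 < |x| < 1` and `y ≠ 0`, the infinite product
`∏_{m=1}^∞ (1 − x^{2m})(1 + x^{2m−1} y)(1 + x^{2m−1} y⁻¹)` converges and equals the
absolutely convergent sum `Σ_{l∈ℤ} x^{l²} y^l`. (The product is indexed by `m : ℕ`,
with `m + 1` playing the role of `m ≥ 1`.) -/
theorem jacobi_triple_product (x y : ℂ) (hx0 : 0 < ‖x‖) (hx1 : ‖x‖ < 1) (hy : y ≠ 0) :
    Multipliable (fun m : ℕ =>
      (1 - x ^ (2 * m + 2)) * (1 + x ^ (2 * m + 1) * y) * (1 + x ^ (2 * m + 1) * y⁻¹)) ∧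
    Summable (fun l : ℤ => ‖x ^ (l ^ 2) * y ^ l‖) ∧
    (∏' m : ℕ,
        (1 - x ^ (2 * m + 2)) * (1 + x ^ (2 * m + 1) * y) * (1 + x ^ (2 * m + 1) * y⁻¹))
      = ∑' l : ℤ, x ^ (l ^ 2) * y ^ l := by
  have hx : x ≠ 0 := by
    intro h
    rw [h, norm_zero] at hx0
    exact lt_irrefl 0 hx0
  have hmul := jtp_multipliable x y hx1 hy
  refine ⟨hmul, theta_summable x y hx1 hy, ?_⟩
  have h1 : Tendsto (fun N : ℕ => ∏ m ∈ Finset.range N,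
      ((1 - x ^ (2 * m + 2)) * (1 + x ^ (2 * m + 1) * y) * (1 + x ^ (2 * m + 1) * y⁻¹)))
      atTop (𝓝 (∏' m : ℕ,
        (1 - x ^ (2 * m + 2)) * (1 + x ^ (2 * m + 1) * y) * (1 + x ^ (2 * m + 1) * y⁻¹))) :=
    HasProd.tendsto_prod_nat hmul.hasProd
  have h1' := h1.congr (fun N => jtp_finite x y hx hx1 hy N)
  exact tendsto_nhds_unique h1' (jtp_sum_tendsto x y hx hx1 hy)
end

section
/- Let q, q₁, z be nonzero complex numbers with 0 < |q| < 1. Then ∏_{i=1}^∞ (1 + q^{2i−1} q₁ z^{−2})(1 + q^{2i−1} q₁^{−1} z²) = (∏_{k=1}^∞ (1 − q^{2k}))^{−1} · Σ_{l∈ℤ} q^{l²} (z²/q₁)^l, where both infinite products converge (are multipliable), the product ∏_{k=1}^∞ (1 − q^{2k}) is nonzero, and the series converges absolutely. -/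
open Finset

namespace JTP

noncomputable def Poch (q : ℂ) (n : ℕ) : ℂ := ∏ k ∈ Finset.range n, (1 - q ^ (2*k+2))

noncomputable def gb (q : ℂ) (M k : ℕ) : ℂ :=
  if k ≤ M then Poch q M / (Poch q k * Poch q (M - k)) else 0

variable {q : ℂ}

lemma fac_ne (hq1 : ‖q‖ < 1) (k : ℕ) : 1 - q ^ (2*k+2) ≠ 0 := by
  intro h
  have h2 : q ^ (2*k+2) = 1 := by linear_combination -h
  have : ‖q ^ (2*k+2)‖ < 1 := by
    rw [norm_pow]
    exact pow_lt_one₀ (norm_nonneg q) hq1 (by omega)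
  rw [h2, norm_one] at this; exact lt_irrefl _ this

lemma Poch_ne (hq1 : ‖q‖ < 1) (n : ℕ) : Poch q n ≠ 0 :=
  Finset.prod_ne_zero_iff.2 fun k _ => fac_ne hq1 k

lemma Poch_succ (n : ℕ) : Poch q (n+1) = Poch q n * (1 - q ^ (2*n+2)) :=
  Finset.prod_range_succ _ n

lemma Poch_zero : Poch q 0 = 1 := rfl

lemma gb_zero (hq1 : ‖q‖ < 1) (M : ℕ) : gb q M 0 = 1 := by
  simp only [gb, if_pos (Nat.zero_le M), Poch_zero, one_mul, Nat.sub_zero]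
  exact div_self (Poch_ne hq1 M)

lemma gb_self (hq1 : ‖q‖ < 1) (M : ℕ) : gb q M M = 1 := by
  simp only [gb, if_pos (le_refl M), Nat.sub_self, Poch_zero, mul_one]
  exact div_self (Poch_ne hq1 M)

lemma gb_of_gt {M k : ℕ} (h : M < k) : gb q M k = 0 := by
  simp [gb, not_le.2 h]

lemma gb_pascal (hq1 : ‖q‖ < 1) (M k : ℕ) (hk : 1 ≤ k) :
    gb q (M+1) k = gb q M k + q ^ (2*(M+1-k)) * gb q M (k-1) := by
  rcases lt_trichotomy k (M+1) with h | h | h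
  · -- k ≤ M
    have hkM : k ≤ M := by omega
    obtain ⟨e, he⟩ : ∃ e, M = k + e := ⟨M - k, by omega⟩
    subst he
    obtain ⟨j, hj⟩ : ∃ j, k = j + 1 := ⟨k - 1, by omega⟩
    subst hj
    rw [gb, gb, gb, if_pos (by omega), if_pos (by omega), if_pos (by omega)]
    have e1 : j + 1 + e + 1 - (j+1) = e + 1 := by omega
    have e2 : j + 1 + e - (j + 1) = e := by omega
    have e3 : j + 1 - 1 = j := by omega
    have e4 : j + 1 + e - j = e + 1 := by omega
    rw [e1, e2, e3, e4, show 2*(e+1) = 2*e+2 by omega]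
    rw [show Poch q (j+1+e+1) = Poch q (j+1+e) * (1 - q^(2*(j+1+e)+2)) from Poch_succ _,
      show Poch q (j+1) = Poch q j * (1 - q^(2*j+2)) from Poch_succ j,
      show Poch q (e+1) = Poch q e * (1 - q^(2*e+2)) from Poch_succ e]
    have hA := Poch_ne (q := q) hq1 (j + 1 + e)
    have hB := Poch_ne (q := q) hq1 j
    have hC := Poch_ne (q := q) hq1 e
    have hj2 := fac_ne (q := q) hq1 j
    have he2 := fac_ne (q := q) hq1 e
    field_simp
    ring
  · -- k = M+1
    subst h
    rw [gb_self hq1, gb_of_gt (show M < M+1 by omega), show M + 1 - 1 = M by omega,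
      gb_self hq1, show 2*(M+1-(M+1)) = 0 by omega]
    simp
  · rw [gb_of_gt (by omega : M + 1 < k), gb_of_gt (by omega : M < k),
      gb_of_gt (by omega : M < k - 1)]
    simp

lemma qbinom_step (hq1 : ‖q‖ < 1) (x : ℂ) (M : ℕ) :
    ∑ k ∈ range (M+1+1), q ^ (k*(k-1)) * gb q (M+1) k * x ^ k
      = (∑ k ∈ range (M+1), q ^ (k*(k-1)) * gb q M k * x ^ k) * (1 + x * q ^ (2*M)) := by
  have key : ∀ k ∈ range (M+1),
      q ^ ((k+1)*((k+1)-1)) * gb q (M+1) (k+1) * x ^ (k+1)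
        = q ^ ((k+1)*((k+1)-1)) * gb q M (k+1) * x ^ (k+1)
          + (q ^ (k*(k-1)) * gb q M k * x ^ k) * (x * q ^ (2*M)) := by
    intro k hk
    rw [mem_range] at hk
    rw [gb_pascal hq1 M (k+1) (by omega), show M + 1 - (k+1) = M - k by omega,
      show (k+1) - 1 = k from rfl]
    have e3 : (k+1)*k + 2*(M-k) = k*(k-1) + 2*M := by
      obtain ⟨e, rfl⟩ : ∃ e, M = k + e := ⟨M - k, by omega⟩
      rcases k with _ | j
      · simp
      · rw [show j + 1 + e - (j+1) = e by omega, show j + 1 - 1 = j from rfl]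
        ring
    have : q ^ ((k+1)*k) * (q ^ (2*(M-k)) * gb q M k) * x ^ (k+1)
        = (q ^ (k*(k-1)) * gb q M k * x ^ k) * (x * q ^ (2*M)) := by
      calc q ^ ((k+1)*k) * (q ^ (2*(M-k)) * gb q M k) * x ^ (k+1)
          = q ^ ((k+1)*k + 2*(M-k)) * gb q M k * x ^ (k+1) := by rw [pow_add]; ring
        _ = q ^ (k*(k-1) + 2*M) * gb q M k * x ^ (k+1) := by rw [e3]
        _ = (q ^ (k*(k-1)) * gb q M k * x ^ k) * (x * q ^ (2*M)) := by rw [pow_add]; ring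
    rw [mul_add, add_mul, this]
  calc ∑ k ∈ range (M+1+1), q ^ (k*(k-1)) * gb q (M+1) k * x ^ k
      = (∑ k ∈ range (M+1), q ^ ((k+1)*((k+1)-1)) * gb q (M+1) (k+1) * x ^ (k+1))
          + q ^ (0*(0-1)) * gb q (M+1) 0 * x ^ 0 :=
        Finset.sum_range_succ' _ (M+1)
    _ = (∑ k ∈ range (M+1), (q ^ ((k+1)*((k+1)-1)) * gb q M (k+1) * x ^ (k+1)
          + (q ^ (k*(k-1)) * gb q M k * x ^ k) * (x * q ^ (2*M))))
          + q ^ (0*(0-1)) * gb q M 0 * x ^ 0 := by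
        rw [Finset.sum_congr rfl key, gb_zero hq1, gb_zero hq1]
    _ = ((∑ k ∈ range (M+1), q ^ ((k+1)*((k+1)-1)) * gb q M (k+1) * x ^ (k+1))
          + q ^ (0*(0-1)) * gb q M 0 * x ^ 0)
          + (∑ k ∈ range (M+1), q ^ (k*(k-1)) * gb q M k * x ^ k) * (x * q ^ (2*M)) := by
        rw [Finset.sum_add_distrib, Finset.sum_mul]; ring
    _ = (∑ k ∈ range (M+1+1), q ^ (k*(k-1)) * gb q M k * x ^ k)
          + (∑ k ∈ range (M+1), q ^ (k*(k-1)) * gb q M k * x ^ k) * (x * q ^ (2*M)) := by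
        rw [← Finset.sum_range_succ' (fun k => q ^ (k*(k-1)) * gb q M k * x ^ k) (M+1)]
    _ = (∑ k ∈ range (M+1), q ^ (k*(k-1)) * gb q M k * x ^ k) * (1 + x * q ^ (2*M)) := by
        rw [Finset.sum_range_succ (fun k => q ^ (k*(k-1)) * gb q M k * x ^ k) (M+1),
          gb_of_gt (show M < M + 1 by omega)]
        ring

/-- Gaussian binomial theorem with `Q = q^2`. -/
lemma qbinom (hq1 : ‖q‖ < 1) (x : ℂ) : ∀ M : ℕ,
    ∏ j ∈ range M, (1 + x * q ^ (2*j)) =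
      ∑ k ∈ range (M+1), q ^ (k*(k-1)) * gb q M k * x ^ k := by
  intro M
  induction M with
  | zero => simp [gb_zero hq1 0]
  | succ M ih => rw [Finset.prod_range_succ, ih, qbinom_step hq1 x M]


lemma sum_odd (N : ℕ) : ∑ j ∈ range N, (2*j+1) = N*N := by
  induction N with
  | zero => simp
  | succ N ih => rw [Finset.sum_range_succ, ih]; ring

lemma finite_jacobi (hq0 : q ≠ 0) (hq1 : ‖q‖ < 1) {t : ℂ} (ht : t ≠ 0) (N : ℕ) :
    ∏ i ∈ range N, ((1 + q ^ (2*i+1) * t⁻¹) * (1 + q ^ (2*i+1) * t))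
      = ∑ k ∈ range (2*N+1), gb q (2*N) k * q ^ (((k:ℤ) - N)^2) * t ^ ((k:ℤ) - N) := by
  set x : ℂ := t * q ^ ((1:ℤ) - 2*N) with hx
  have hqb := qbinom hq1 x (2*N)
  -- rewrite LHS of hqb
  have hsplit : ∏ j ∈ range (2*N), (1 + x * q ^ (2*j))
      = (∏ j ∈ range N, (1 + x * q ^ (2*j)))
        * ∏ j ∈ range N, (1 + x * q ^ (2*(N+j))) := by
    rw [two_mul, Finset.prod_range_add]
  have h2 : ∀ j, (1 + x * q ^ (2*(N+j))) = 1 + q ^ (2*j+1) * t := by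
    intro j
    have : x * q ^ (2*(N+j)) = q ^ (2*j+1) * t := by
      rw [hx, ← zpow_natCast q (2*(N+j)), mul_assoc, ← zpow_add₀ hq0,
        show (1:ℤ) - 2*N + (2*(N+j) : ℕ) = ((2*j+1 : ℕ) : ℤ) by push_cast; ring,
        zpow_natCast]
      ring
    rw [this]
  have h1 : (∏ j ∈ range N, (1 + x * q ^ (2*j)))
      = t ^ N * (q ^ (N*N))⁻¹ * ∏ j ∈ range N, (1 + q ^ (2*j+1) * t⁻¹) := by
    rw [← Finset.prod_range_reflect]
    have hterm : ∀ j ∈ range N, (1 + x * q ^ (2*(N - 1 - j)))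
        = (t * (q ^ (2*j+1))⁻¹) * (1 + q ^ (2*j+1) * t⁻¹) := by
      intro j hj
      rw [mem_range] at hj
      have hxq : x * q ^ (2*(N-1-j)) = t * (q ^ (2*j+1))⁻¹ := by
        rw [hx, ← zpow_natCast q (2*(N-1-j)), mul_assoc, ← zpow_add₀ hq0,
          show (1:ℤ) - 2*N + (2*(N-1-j) : ℕ) = -((2*j+1 : ℕ) : ℤ) by
            push_cast [show (((2*(N-1-j)) : ℕ) : ℤ) = 2*(N:ℤ) - 2 - 2*j by push_cast; omega]
            ring,
          zpow_neg, zpow_natCast]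
      rw [hxq]
      have : q ^ (2*j+1) ≠ 0 := pow_ne_zero _ hq0
      field_simp
      ring
    rw [Finset.prod_congr rfl hterm, Finset.prod_mul_distrib, Finset.prod_mul_distrib,
      Finset.prod_const, Finset.prod_inv_distrib, Finset.prod_pow_eq_pow_sum, sum_odd,
      Finset.card_range]
  rw [hsplit, h1, Finset.prod_congr rfl (fun j _ => h2 j)] at hqb
  -- now hqb : t^N * (q^(N*N))⁻¹ * P₁ * P₂ = ∑ ...
  have hP : ∏ i ∈ range N, ((1 + q ^ (2*i+1) * t⁻¹) * (1 + q ^ (2*i+1) * t))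
      = (∏ j ∈ range N, (1 + q ^ (2*j+1) * t⁻¹)) * ∏ j ∈ range N, (1 + q ^ (2*j+1) * t) :=
    Finset.prod_mul_distrib
  have htN : (t : ℂ) ^ N ≠ 0 := pow_ne_zero _ ht
  have hqN : (q : ℂ) ^ (N*N) ≠ 0 := pow_ne_zero _ hq0
  have key : ∏ i ∈ range N, ((1 + q ^ (2*i+1) * t⁻¹) * (1 + q ^ (2*i+1) * t))
      = (t ^ N)⁻¹ * q ^ (N*N) *
        ∑ k ∈ range (2*N+1), q ^ (k*(k-1)) * gb q (2*N) k * x ^ k := by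
    rw [← hqb, hP]
    field_simp
  rw [key, Finset.mul_sum]
  refine Finset.sum_congr rfl fun k hk => ?_
  rw [hx, mul_pow, ← zpow_natCast (q ^ ((1:ℤ) - 2*N)) k, ← zpow_mul,
    ← zpow_natCast t k, ← zpow_natCast q (k*(k-1)),
    ← zpow_natCast q (N*N), ← zpow_natCast t N,
    show ((t:ℂ) ^ (N:ℤ))⁻¹ = t ^ (-(N:ℤ)) from (zpow_neg t (N:ℤ)).symm]
  have et : t ^ (-(N:ℤ)) * (t ^ (k:ℤ)) = t ^ ((k:ℤ) - N) := by
    rw [← zpow_add₀ ht]; ring_nf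
  have eq2 : (q:ℂ) ^ ((N*N : ℕ) : ℤ) * q ^ ((k*(k-1) : ℕ) : ℤ) * q ^ (((1:ℤ) - 2*N) * k)
      = q ^ (((k:ℤ) - N)^2) := by
    rw [← zpow_add₀ hq0, ← zpow_add₀ hq0]
    congr 1
    rcases Nat.eq_zero_or_pos k with rfl | hkpos
    · push_cast; ring
    · push_cast [show ((k*(k-1) : ℕ) : ℤ) = (k:ℤ)*(k-1) by push_cast [Nat.cast_sub hkpos]; ring]
      ring
  calc t ^ (-(N:ℤ)) * q ^ ((N*N : ℕ) : ℤ) * (q ^ ((k*(k-1) : ℕ):ℤ) * gb q (2*N) k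
        * (t ^ (k:ℤ) * q ^ (((1:ℤ) - 2*N) * k)))
      = gb q (2*N) k * ((q:ℂ) ^ ((N*N : ℕ) : ℤ) * q ^ ((k*(k-1) : ℕ) : ℤ)
          * q ^ (((1:ℤ) - 2*N) * k)) * (t ^ (-(N:ℤ)) * (t ^ (k:ℤ))) := by ring
    _ = gb q (2*N) k * q ^ (((k:ℤ) - N)^2) * t ^ ((k:ℤ) - N) := by rw [eq2, et]


open Filter Topology

lemma multipliable_one_add (u : ℕ → ℂ) (hu : Summable fun i => ‖u i‖) :
    Multipliable (fun i => 1 + u i) := by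
  by_cases hzero : ∀ i, 1 + u i ≠ 0
  · have hlog : Summable fun i => Complex.log (1 + u i) := by
      have h0 : Tendsto (fun i => ‖u i‖) atTop (𝓝 0) := hu.tendsto_atTop_zero
      have hev : ∀ᶠ i in atTop, ‖u i‖ ≤ 1/2 :=
        (h0.eventually_lt_const (by norm_num : (0:ℝ) < 1/2)).mono fun i h => le_of_lt h
      refine Summable.of_norm_bounded_eventually_nat (g := fun i => 3/2 * ‖u i‖)
        (hu.mul_left _) ?_
      filter_upwards [hev] with i hi
      exact Complex.norm_log_one_add_half_le_self hi
    have := Complex.multipliable_of_summable_log hlog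
    exact this
  · push_neg at hzero
    obtain ⟨i₀, h0⟩ := hzero
    refine ⟨0, ?_⟩
    have : ∀ᶠ s : Finset ℕ in atTop, (∏ i ∈ s, (1 + u i)) = 0 := by
      filter_upwards [eventually_ge_atTop ({i₀} : Finset ℕ)] with s hs
      exact Finset.prod_eq_zero (hs (Finset.mem_singleton_self i₀)) h0
    exact Tendsto.congr' (by filter_upwards [this] with s hs using hs.symm) tendsto_const_nhds

lemma summable_pow_mul_geometric {r M : ℝ} (hr0 : 0 ≤ r) (hr1 : r < 1) (hM : 0 ≤ M) :
    Summable (fun n : ℕ => r ^ (n^2) * M ^ n) := by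
  have hhalf : ∀ᶠ n : ℕ in atTop, r ^ (2*n+1) * M ≤ 1/2 := by
    have : Tendsto (fun n : ℕ => r ^ (2*n+1) * M) atTop (𝓝 0) := by
      have heq : (fun n : ℕ => r ^ (2*n+1) * M) = fun n : ℕ => (r * M) * (r^2) ^ n := by
        funext n; rw [pow_add, pow_mul]; ring
      rw [heq]
      simpa using (tendsto_pow_atTop_nhds_zero_of_lt_one (by positivity)
        (by nlinarith)).const_mul (r * M)
    exact (this.eventually_lt_const (by norm_num : (0:ℝ) < 1/2)).mono fun n h => le_of_lt h
  refine summable_of_ratio_norm_eventually_le (r := 1/2) (by norm_num) ?_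
  filter_upwards [hhalf] with n hn
  have h1 : r ^ ((n+1)^2) * M ^ (n+1) = (r ^ (2*n+1) * M) * (r ^ (n^2) * M ^ n) := by
    rw [show (n+1)^2 = n^2 + (2*n+1) by ring, pow_add, pow_succ]; ring
  rw [Real.norm_eq_abs, Real.norm_eq_abs, abs_of_nonneg (by positivity),
    abs_of_nonneg (by positivity), h1]
  have hfn : (0:ℝ) ≤ r ^ (n^2) * M ^ n := by positivity
  nlinarith [mul_le_mul_of_nonneg_right hn hfn]

variable {q : ℂ}

lemma summable_geom_aux (hq1 : ‖q‖ < 1) (c : ℝ) :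
    Summable (fun k : ℕ => c * ‖q‖ ^ (2*k+2)) := by
  have : Summable (fun k : ℕ => (c * ‖q‖^2) * (‖q‖^2) ^ k) := by
    refine Summable.mul_left _ (summable_geometric_of_lt_one (by positivity) ?_)
    nlinarith [norm_nonneg q]
  refine this.congr fun k => ?_
  rw [pow_add, pow_mul]; ring

lemma norm_Poch_le (hq1 : ‖q‖ < 1) (n : ℕ) :
    ‖Poch q n‖ ≤ Real.exp (∑' k : ℕ, ‖q‖ ^ (2*k+2)) := by
  rw [Poch, norm_prod]
  calc ∏ k ∈ range n, ‖1 - q ^ (2*k+2)‖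
      ≤ ∏ k ∈ range n, Real.exp (‖q‖ ^ (2*k+2)) := by
        refine Finset.prod_le_prod (fun k _ => norm_nonneg _) fun k _ => ?_
        calc ‖1 - q ^ (2*k+2)‖ ≤ ‖(1:ℂ)‖ + ‖q ^ (2*k+2)‖ := norm_sub_le _ _
          _ = 1 + ‖q‖ ^ (2*k+2) := by rw [norm_one, norm_pow]
          _ ≤ Real.exp (‖q‖ ^ (2*k+2)) := by
              rw [add_comm]; exact Real.add_one_le_exp _
    _ = Real.exp (∑ k ∈ range n, ‖q‖ ^ (2*k+2)) := (Real.exp_sum _ _).symm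
    _ ≤ Real.exp (∑' k : ℕ, ‖q‖ ^ (2*k+2)) := by
        refine Real.exp_le_exp.2 (Summable.sum_le_tsum _ (fun k _ => by positivity) ?_)
        simpa using summable_geom_aux hq1 1

lemma prod_one_sub_ge (x : ℕ → ℝ) (h0 : ∀ k, 0 ≤ x k) (h1 : ∀ k, x k ≤ 1) (n : ℕ) :
    1 - ∑ k ∈ range n, x k ≤ ∏ k ∈ range n, (1 - x k) := by
  induction n with
  | zero => simp
  | succ n ih =>
    rw [Finset.sum_range_succ, Finset.prod_range_succ]
    have hs : (0:ℝ) ≤ ∑ k ∈ range n, x k := Finset.sum_nonneg fun k _ => h0 k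
    have hx : 0 ≤ 1 - x n := by linarith [h1 n]
    nlinarith [mul_le_mul_of_nonneg_right ih hx, h0 n]

lemma prod_one_sub_mono (hq1 : ‖q‖ < 1) {n m : ℕ} (h : n ≤ m) :
    ∏ k ∈ range m, (1 - ‖q‖ ^ (2*k+2)) ≤ ∏ k ∈ range n, (1 - ‖q‖ ^ (2*k+2)) := by
  have hfac : ∀ k : ℕ, 0 < 1 - ‖q‖ ^ (2*k+2) := fun k => by
    have : ‖q‖ ^ (2*k+2) < 1 := pow_lt_one₀ (norm_nonneg q) hq1 (by omega)
    linarith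
  obtain ⟨e, rfl⟩ : ∃ e, m = n + e := ⟨m - n, by omega⟩
  rw [Finset.prod_range_add]
  have h2 : ∏ j ∈ range e, (1 - ‖q‖ ^ (2*(n+j)+2)) ≤ 1 :=
    Finset.prod_le_one (fun k _ => le_of_lt (hfac _)) fun k _ => by
      nlinarith [pow_nonneg (norm_nonneg q) (2*(n+k)+2)]
  nlinarith [Finset.prod_pos (fun k (_ : k ∈ range n) => hfac k),
    mul_le_mul_of_nonneg_left h2
      (le_of_lt (Finset.prod_pos (fun k (_ : k ∈ range n) => hfac k)))]

lemma exists_D (hq1 : ‖q‖ < 1) :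
    ∃ D : ℝ, 0 < D ∧ ∀ n, D ≤ ∏ k ∈ range n, (1 - ‖q‖ ^ (2*k+2)) := by
  set r := ‖q‖ with hr
  have hr0 : 0 ≤ r := norm_nonneg q
  have hfac : ∀ k : ℕ, 0 < 1 - r ^ (2*k+2) := fun k => by
    have : r ^ (2*k+2) < 1 := pow_lt_one₀ hr0 hq1 (by omega)
    linarith
  set T := ∑' k : ℕ, r ^ (2*k+2) with hT
  have hTsum : Summable (fun k : ℕ => r ^ (2*k+2)) := by
    simpa using summable_geom_aux hq1 1
  obtain ⟨K, hK⟩ : ∃ K : ℕ, (r^2) ^ K * T ≤ 1/2 := by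
    have h2 : Tendsto (fun K : ℕ => (r^2) ^ K * T) atTop (𝓝 0) := by
      simpa using (tendsto_pow_atTop_nhds_zero_of_lt_one (by positivity)
        (by nlinarith)).mul_const T
    exact ((h2.eventually_lt_const (by norm_num : (0:ℝ) < 1/2)).mono
      fun K h => le_of_lt h).exists
  refine ⟨(∏ k ∈ range K, (1 - r ^ (2*k+2))) * (1/2),
    mul_pos (Finset.prod_pos fun k _ => hfac k) one_half_pos, fun n => ?_⟩
  rcases le_or_gt n K with h | h
  · calc (∏ k ∈ range K, (1 - r ^ (2*k+2))) * (1/2)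
        ≤ ∏ k ∈ range K, (1 - r ^ (2*k+2)) := by
          nlinarith [Finset.prod_pos (fun k (_ : k ∈ range K) => hfac k)]
      _ ≤ ∏ k ∈ range n, (1 - r ^ (2*k+2)) := prod_one_sub_mono hq1 h
  · obtain ⟨e, rfl⟩ : ∃ e, n = K + e := ⟨n - K, by omega⟩
    rw [Finset.prod_range_add]
    have hsum_le : ∑ j ∈ range e, r ^ (2*(K+j)+2) ≤ 1/2 := by
      have hKsum : Summable (fun j : ℕ => r ^ (2*(K+j)+2)) := by
        refine ((hTsum.mul_left ((r^2)^K)).congr fun j => ?_)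
        rw [← pow_mul, ← pow_add]; congr 1; ring
      calc ∑ j ∈ range e, r ^ (2*(K+j)+2)
          ≤ ∑' j : ℕ, r ^ (2*(K+j)+2) :=
            Summable.sum_le_tsum _ (fun j _ => by positivity) hKsum
        _ = (r^2) ^ K * T := by
            rw [hT, ← tsum_mul_left]
            congr 1; funext j; rw [← pow_mul, ← pow_add]; congr 1; ring
        _ ≤ 1/2 := hK
    have hW := prod_one_sub_ge (fun j => r ^ (2*(K+j)+2)) (fun j => by positivity)
      (fun j => le_of_lt (by nlinarith [hfac (K+j)])) e
    have hpos := Finset.prod_pos (fun k (_ : k ∈ range K) => hfac k)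
    have : (1:ℝ)/2 ≤ ∏ j ∈ range e, (1 - r ^ (2*(K+j)+2)) := by linarith
    nlinarith

lemma norm_Poch_ge (hq1 : ‖q‖ < 1) (n : ℕ) :
    ∏ k ∈ range n, (1 - ‖q‖ ^ (2*k+2)) ≤ ‖Poch q n‖ := by
  rw [Poch, norm_prod]
  refine Finset.prod_le_prod (fun k _ => ?_) fun k _ => ?_
  · have : ‖q‖ ^ (2*k+2) < 1 := pow_lt_one₀ (norm_nonneg q) hq1 (by omega)
    linarith
  · calc 1 - ‖q‖ ^ (2*k+2) = ‖(1:ℂ)‖ - ‖q ^ (2*k+2)‖ := by rw [norm_one, norm_pow]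
      _ ≤ ‖1 - q ^ (2*k+2)‖ := norm_sub_norm_le _ _


lemma summable_norm_c_pow (hq1 : ‖q‖ < 1) (c : ℂ) :
    Summable (fun i : ℕ => ‖q ^ (2*i+1) * c‖) := by
  have : Summable (fun i : ℕ => (‖q‖ * ‖c‖) * (‖q‖^2) ^ i) := by
    refine Summable.mul_left _ (summable_geometric_of_lt_one (by positivity) ?_)
    nlinarith [norm_nonneg q]
  refine this.congr fun i => ?_
  rw [norm_mul, norm_pow, pow_add, pow_mul]; ring

lemma multipliable_aux (hq1 : ‖q‖ < 1) (c : ℂ) :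
    Multipliable (fun i : ℕ => 1 + q ^ (2*i+1) * c) :=
  multipliable_one_add _ (summable_norm_c_pow hq1 c)

lemma multipliable_D (hq1 : ‖q‖ < 1) :
    Multipliable (fun k : ℕ => 1 - q ^ (2*k+2)) := by
  have := multipliable_one_add (fun k => -(q ^ (2*k+2))) (by
    refine (summable_geom_aux hq1 1).congr fun k => ?_
    rw [norm_neg, norm_pow]; ring)
  refine this.congr fun k => ?_
  rw [sub_eq_add_neg]

lemma Poch_tendsto (hq1 : ‖q‖ < 1) :
    Tendsto (fun n => Poch q n) atTop (𝓝 (∏' k : ℕ, (1 - q ^ (2*k+2)))) :=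
  (multipliable_D hq1).hasProd.tendsto_prod_nat

lemma D_le_norm_Poch (hq1 : ‖q‖ < 1) :
    ∃ D : ℝ, 0 < D ∧ ∀ n, D ≤ ‖Poch q n‖ := by
  obtain ⟨D, hD0, hD⟩ := exists_D hq1
  exact ⟨D, hD0, fun n => (hD n).trans (norm_Poch_ge hq1 n)⟩

lemma Pi_ne (hq1 : ‖q‖ < 1) : (∏' k : ℕ, (1 - q ^ (2*k+2))) ≠ 0 := by
  obtain ⟨D, hD0, hD⟩ := D_le_norm_Poch hq1
  have h := (Poch_tendsto hq1).norm
  have : D ≤ ‖∏' k : ℕ, (1 - q ^ (2*k+2))‖ :=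
    ge_of_tendsto h (Filter.Eventually.of_forall hD)
  intro hcontra
  rw [hcontra, norm_zero] at this
  linarith

lemma gb_bound (hq1 : ‖q‖ < 1) : ∃ C : ℝ, 0 < C ∧ ∀ M k, ‖gb q M k‖ ≤ C := by
  obtain ⟨D, hD0, hD⟩ := D_le_norm_Poch hq1
  refine ⟨Real.exp (∑' k : ℕ, ‖q‖ ^ (2*k+2)) / (D * D), by positivity, fun M k => ?_⟩
  rw [gb]
  split_ifs with h
  · rw [norm_div, norm_mul]
    exact div_le_div₀ (Real.exp_pos _).le (norm_Poch_le hq1 M) (by positivity)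
      (mul_le_mul (hD k) (hD (M-k)) hD0.le (norm_nonneg _))
  · rw [norm_zero]; positivity

lemma norm_term_le (q t : ℂ) (l : ℤ) :
    ‖q ^ (l^2) * t ^ l‖ ≤ ‖q‖ ^ ((l^2).toNat) * (max ‖t‖ ‖t⁻¹‖) ^ l.natAbs := by
  rw [norm_mul, norm_zpow, norm_zpow]
  have h1 : ‖q‖ ^ (l^2) = ‖q‖ ^ ((l^2).toNat) := by
    rw [← zpow_natCast ‖q‖ ((l^2).toNat), Int.toNat_of_nonneg (sq_nonneg l)]
  rw [h1]
  refine mul_le_mul_of_nonneg_left ?_ (by positivity)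
  rcases Int.natAbs_eq l with h | h
  · rw [h, zpow_natCast, Int.natAbs_natCast]
    exact pow_le_pow_left₀ (norm_nonneg t) (le_max_left _ _) _
  · rw [h, zpow_neg, zpow_natCast, ← inv_pow, Int.natAbs_neg, Int.natAbs_natCast]
    have hti : ‖t‖⁻¹ = ‖t⁻¹‖ := by simp
    rw [hti]
    exact pow_le_pow_left₀ (norm_nonneg t⁻¹) (le_max_right _ _) _

lemma summable_B {r M : ℝ} (hr0 : 0 ≤ r) (hr1 : r < 1) (hM : 0 ≤ M) :
    Summable (fun l : ℤ => r ^ ((l^2).toNat) * M ^ l.natAbs) := by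
  have h := summable_pow_mul_geometric hr0 hr1 hM
  refine Summable.of_nat_of_neg (h.congr fun n => ?_) (h.congr fun n => ?_)
  · have e1 : (((n:ℤ))^2).toNat = n^2 := by
      rw [show ((n:ℤ))^2 = ((n^2:ℕ):ℤ) by push_cast; ring]; exact Int.toNat_natCast _
    rw [e1, Int.natAbs_natCast]
  · have e1 : ((-(n:ℤ))^2).toNat = n^2 := by
      rw [show (-(n:ℤ))^2 = ((n^2:ℕ):ℤ) by push_cast; ring]; exact Int.toNat_natCast _
    rw [e1, Int.natAbs_neg, Int.natAbs_natCast]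


lemma claim1 (hq0 : q ≠ 0) (hq1 : ‖q‖ < 1) {t : ℂ} (ht : t ≠ 0) (N : ℕ) :
    ∏ i ∈ range N, ((1 + q ^ (2*i+1) * t⁻¹) * (1 + q ^ (2*i+1) * t))
      = ∑' l : ℤ, (if l.natAbs ≤ N then gb q (2*N) ((l + N).toNat) * (q ^ (l^2) * t ^ l)
          else 0) := by
  rw [finite_jacobi hq0 hq1 ht N,
    tsum_eq_sum (s := Finset.Icc (-(N:ℤ)) N) (f := fun l : ℤ =>
      if l.natAbs ≤ N then gb q (2*N) ((l + N).toNat) * (q ^ (l^2) * t ^ l) else 0)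
      (fun l hl => if_neg (by simp only [Finset.mem_Icc] at hl; omega))]
  refine Finset.sum_nbij' (i := fun (k : ℕ) => (k:ℤ) - N)
    (j := fun (l : ℤ) => (l + N).toNat) ?_ ?_ ?_ ?_ ?_
  · intro k hk; rw [Finset.mem_range] at hk; rw [Finset.mem_Icc]; omega
  · intro l hl; rw [Finset.mem_Icc] at hl; rw [Finset.mem_range]; omega
  · intro k hk; rw [Finset.mem_range] at hk; omega
  · intro l hl; rw [Finset.mem_Icc] at hl; omega
  · intro k hk; rw [Finset.mem_range] at hk
    rw [if_pos (by omega), show ((k:ℤ) - N + N).toNat = k by omega, mul_assoc]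

end JTP

open Filter Topology JTP in
/-- Evaluation of the glued even-index superpotential `W₂′`:
for nonzero `q, q₁, z` with `0 < |q| < 1`,
`∏_{i=1}^∞ (1 + q^{2i−1} q₁ z⁻²)(1 + q^{2i−1} q₁⁻¹ z²)
  = (∏_{k=1}^∞ (1 − q^{2k}))⁻¹ · Σ_{l∈ℤ} q^{l²} (z²/q₁)^l`,
where both infinite products converge, the product `∏_{k=1}^∞ (1 − q^{2k})` is nonzero,
and the series converges absolutely. -/
theorem glued_superpotential_even (q q₁ z : ℂ) (hq0 : 0 < ‖q‖) (hq1 : ‖q‖ < 1)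
    (hq₁ : q₁ ≠ 0) (hz : z ≠ 0) :
    Multipliable (fun i : ℕ =>
      (1 + q ^ (2 * i + 1) * q₁ * (z ^ 2)⁻¹) * (1 + q ^ (2 * i + 1) * q₁⁻¹ * z ^ 2)) ∧
    Multipliable (fun k : ℕ => 1 - q ^ (2 * k + 2)) ∧
    (∏' k : ℕ, (1 - q ^ (2 * k + 2))) ≠ 0 ∧
    Summable (fun l : ℤ => ‖q ^ (l ^ 2) * (z ^ 2 / q₁) ^ l‖) ∧
    (∏' i : ℕ, (1 + q ^ (2 * i + 1) * q₁ * (z ^ 2)⁻¹) * (1 + q ^ (2 * i + 1) * q₁⁻¹ * z ^ 2))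
      = (∏' k : ℕ, (1 - q ^ (2 * k + 2)))⁻¹ * ∑' l : ℤ, q ^ (l ^ 2) * (z ^ 2 / q₁) ^ l := by
  have hq0' : q ≠ 0 := by
    intro h; rw [h, norm_zero] at hq0; exact lt_irrefl _ hq0
  set t : ℂ := z ^ 2 / q₁ with htdef
  have ht : t ≠ 0 := div_ne_zero (pow_ne_zero 2 hz) hq₁
  have e1 : ∀ i : ℕ, (1 + q ^ (2 * i + 1) * q₁ * (z ^ 2)⁻¹) * (1 + q ^ (2 * i + 1) * q₁⁻¹ * z ^ 2)
      = (1 + q ^ (2 * i + 1) * t⁻¹) * (1 + q ^ (2 * i + 1) * t) := by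
    intro i
    have h1 : q₁ * (z ^ 2)⁻¹ = t⁻¹ := by rw [htdef, inv_div, div_eq_mul_inv]
    have h2 : q₁⁻¹ * z ^ 2 = t := by rw [htdef, div_eq_mul_inv]; ring
    rw [mul_assoc, h1, mul_assoc, h2]
  have hM1 : Multipliable (fun i : ℕ =>
      (1 + q ^ (2 * i + 1) * q₁ * (z ^ 2)⁻¹) * (1 + q ^ (2 * i + 1) * q₁⁻¹ * z ^ 2)) :=
    ((multipliable_aux hq1 t⁻¹).mul (multipliable_aux hq1 t)).congr fun i => (e1 i).symm
  have hM2 := multipliable_D (q := q) hq1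
  have hPi := Pi_ne (q := q) hq1
  set Mx := max ‖t‖ ‖t⁻¹‖ with hMx
  have hMx0 : 0 ≤ Mx := le_trans (norm_nonneg t) (le_max_left _ _)
  have hB := summable_B (norm_nonneg q) hq1 hMx0
  have hS : Summable (fun l : ℤ => ‖q ^ (l ^ 2) * t ^ l‖) :=
    Summable.of_nonneg_of_le (fun l => norm_nonneg _) (fun l => norm_term_le q t l) hB
  refine ⟨hM1, hM2, hPi, hS, ?_⟩
  set Pi := ∏' k : ℕ, (1 - q ^ (2 * k + 2)) with hPidef
  obtain ⟨C, hC0, hC⟩ := gb_bound (q := q) hq1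
  set F : ℕ → ℤ → ℂ := fun N l =>
    if l.natAbs ≤ N then gb q (2 * N) ((l + N).toNat) * (q ^ (l ^ 2) * t ^ l) else 0 with hF
  have hTan : Tendsto (fun N => ∑' l : ℤ, F N l) atTop
      (𝓝 (∑' l : ℤ, Pi⁻¹ * (q ^ (l ^ 2) * t ^ l))) := by
    refine tendsto_tsum_of_dominated_convergence
      (bound := fun l : ℤ => C * (‖q‖ ^ ((l ^ 2).toNat) * Mx ^ l.natAbs))
      (hB.mul_left C) ?_ ?_
    · intro l
      have hPoch : Tendsto (fun n => Poch q n) atTop (𝓝 Pi) := Poch_tendsto hq1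
      have T1 : Tendsto (fun N : ℕ => Poch q (2 * N)) atTop (𝓝 Pi) :=
        hPoch.comp (tendsto_atTop_mono (fun n => Nat.le_mul_of_pos_left n two_pos) tendsto_id)
      have T2 : Tendsto (fun N : ℕ => Poch q ((l + N).toNat)) atTop (𝓝 Pi) :=
        hPoch.comp (tendsto_atTop.2 fun b =>
          eventually_atTop.2 ⟨b + l.natAbs, fun N hN => by omega⟩)
      have T3 : Tendsto (fun N : ℕ => Poch q (2 * N - (l + N).toNat)) atTop (𝓝 Pi) :=
        hPoch.comp (tendsto_atTop.2 fun b =>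
          eventually_atTop.2 ⟨b + l.natAbs, fun N hN => by omega⟩)
      have Tq : Tendsto (fun N : ℕ => Poch q (2 * N) /
            (Poch q ((l + N).toNat) * Poch q (2 * N - (l + N).toNat)) * (q ^ (l ^ 2) * t ^ l))
          atTop (𝓝 (Pi / (Pi * Pi) * (q ^ (l ^ 2) * t ^ l))) :=
        (T1.div (T2.mul T3) (mul_ne_zero hPi hPi)).mul_const _
      have hlim : Pi / (Pi * Pi) = Pi⁻¹ := by
        rw [div_mul_eq_div_div, div_self hPi, one_div]
      rw [hlim] at Tq
      refine Tq.congr' ?_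
      filter_upwards [eventually_ge_atTop l.natAbs] with N hN
      rw [hF]
      dsimp only
      rw [if_pos hN, gb, if_pos (by omega)]
    · refine Filter.Eventually.of_forall fun N => fun l => ?_
      rw [hF]
      dsimp only
      split_ifs with h
      · rw [norm_mul]
        exact mul_le_mul (hC _ _) (norm_term_le q t l) (norm_nonneg _) hC0.le
      · rw [norm_zero]; positivity
  have hClaim : ∀ N : ℕ, (∏ i ∈ Finset.range N,
      ((1 + q ^ (2 * i + 1) * q₁ * (z ^ 2)⁻¹) * (1 + q ^ (2 * i + 1) * q₁⁻¹ * z ^ 2)))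
        = ∑' l : ℤ, F N l := by
    intro N
    rw [Finset.prod_congr rfl fun i _ => e1 i]
    exact claim1 hq0' hq1 ht N
  have hProd : Tendsto (fun N => ∏ i ∈ Finset.range N,
      ((1 + q ^ (2 * i + 1) * q₁ * (z ^ 2)⁻¹) * (1 + q ^ (2 * i + 1) * q₁⁻¹ * z ^ 2)))
      atTop (𝓝 (∏' i : ℕ,
        (1 + q ^ (2 * i + 1) * q₁ * (z ^ 2)⁻¹) * (1 + q ^ (2 * i + 1) * q₁⁻¹ * z ^ 2))) :=
    hM1.hasProd.tendsto_prod_nat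
  have hmain := tendsto_nhds_unique hProd (hTan.congr fun N => (hClaim N).symm)
  rw [hmain, tsum_mul_left]
end

section
/- Let τ, τ₁, ζ be complex numbers with Im τ > 0, and set q = e^{2πiτ}, q₁ = e^{2πiτ₁}, z = e^{2πiζ}. Then ∏_{i=1}^∞ (1 + q^{2i−1} q₁ z^{−2})(1 + q^{2i−1} q₁^{−1} z²) = (e^{πiτ/6} / η(2τ)) · ϑ_{0,0}(2ζ − τ₁, 2τ). -/
/-- The theta function with characteristic `(a, b)`:
`ϑ_{a,b}(ζ,τ) = Σ_{n∈ℤ} exp(πi(n+a)²τ)·exp(2πi(n+a)(ζ+b))`. -/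
noncomputable def jTheta (a b : ℝ) (ζ τ : ℂ) : ℂ :=
  ∑' n : ℤ, Complex.exp (Real.pi * Complex.I * ((n : ℂ) + (a : ℂ)) ^ 2 * τ) *
    Complex.exp (2 * Real.pi * Complex.I * ((n : ℂ) + (a : ℂ)) * (ζ + (b : ℂ)))

/-- The Dedekind eta function `η(τ) = e^{πiτ/12} ∏_{m=1}^∞ (1 − e^{2πiτm})`. -/
noncomputable def dedekindEta (τ : ℂ) : ℂ :=
  Complex.exp (Real.pi * Complex.I * τ / 12) *
    ∏' m : ℕ, (1 - Complex.exp (2 * Real.pi * Complex.I * τ * ((m : ℂ) + 1)))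

open Finset Filter Topology Complex

noncomputable def Pfin (q : ℂ) (n : ℕ) : ℂ := ∏ j ∈ Finset.range n, (1 - q ^ (2*j+2))

noncomputable def gb (q : ℂ) (n k : ℕ) : ℂ :=
  if k ≤ n then Pfin q n / (Pfin q k * Pfin q (n-k)) else 0

variable {q x : ℂ}


lemma fac_ne (hq : ‖q‖ < 1) (j : ℕ) : (1 : ℂ) - q ^ (2*j+2) ≠ 0 := by
  intro h
  have h1 : q ^ (2*j+2) = 1 := by linear_combination -h
  have : ‖q ^ (2*j+2)‖ < 1 := by
    rw [norm_pow]
    exact pow_lt_one₀ (norm_nonneg q) hq (by omega)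
  rw [h1, norm_one] at this; exact lt_irrefl _ this

lemma Pfin_ne (hq : ‖q‖ < 1) (n : ℕ) : Pfin q n ≠ 0 :=
  Finset.prod_ne_zero_iff.mpr fun j _ => fac_ne hq j

lemma Pfin_succ (n : ℕ) : Pfin q (n+1) = Pfin q n * (1 - q ^ (2*n+2)) :=
  Finset.prod_range_succ _ n

@[simp] lemma Pfin_zero : Pfin q 0 = 1 := rfl

lemma gb_self (hq : ‖q‖ < 1) (n : ℕ) : gb q n n = 1 := by
  simp [gb, div_self (Pfin_ne hq n)]

lemma gb_zero' (hq : ‖q‖ < 1) (n : ℕ) : gb q n 0 = 1 := by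
  simp [gb, div_self (Pfin_ne hq n)]

lemma gb_of_gt {n k : ℕ} (h : n < k) : gb q n k = 0 := by
  simp [gb, Nat.not_le.mpr h]

lemma gb_eq {n k : ℕ} (h : k ≤ n) : gb q n k = Pfin q n / (Pfin q k * Pfin q (n-k)) := by
  simp [gb, h]

lemma gb_pascal (hq : ‖q‖ < 1) (k d : ℕ) :
    gb q (k+d+1) (k+1) = gb q (k+d) (k+1) + q ^ (2*d) * gb q (k+d) k := by
  rcases d with _ | e
  · simp [gb_of_gt (Nat.lt_succ_self k), gb_self hq]
  · have h1 : gb q (k+(e+1)+1) (k+1) = Pfin q (k+e+2) / (Pfin q (k+1) * Pfin q (e+1)) := by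
      rw [gb_eq (by omega), show k+(e+1)+1 - (k+1) = e+1 by omega,
        show k+(e+1)+1 = k+e+2 by omega]
    have h2 : gb q (k+(e+1)) (k+1) = Pfin q (k+e+1) / (Pfin q (k+1) * Pfin q e) := by
      rw [gb_eq (by omega), show k+(e+1) - (k+1) = e by omega, show k+(e+1) = k+e+1 by omega]
    have h3 : gb q (k+(e+1)) k = Pfin q (k+e+1) / (Pfin q k * Pfin q (e+1)) := by
      rw [gb_eq (by omega), show k+(e+1) - k = e+1 by omega, show k+(e+1) = k+e+1 by omega]
    rw [h1, h2, h3]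
    have e1 : Pfin q (k+e+2) = Pfin q (k+e+1) * (1 - q ^ (2*(k+e+1)+2)) := Pfin_succ _
    have e2 : Pfin q (e+1) = Pfin q e * (1 - q ^ (2*e+2)) := Pfin_succ _
    have e3 : Pfin q (k+1) = Pfin q k * (1 - q ^ (2*k+2)) := Pfin_succ _
    have n1 := Pfin_ne hq (k+e+1)
    have n2 := Pfin_ne hq e
    have n3 := Pfin_ne hq k
    have n4 := fac_ne hq e
    have n5 := fac_ne hq k
    rw [e1, e2, e3]
    have key : (1 : ℂ) - q ^ (2*(k+e+1)+2) =
        (1 - q ^ (2*e+2)) + q ^ (2*(e+1)) * (1 - q ^ (2*k+2)) := by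
      rw [show 2*(k+e+1)+2 = (2*(e+1)) + (2*k+2) by ring, pow_add]
      ring
    rw [key]
    field_simp

lemma cauchy (hq : ‖q‖ < 1) (y : ℂ) : ∀ n : ℕ,
    ∏ k ∈ Finset.range n, (1 + y * q ^ (2*k))
      = ∑ j ∈ Finset.range (n+1), q ^ (j*(j-1)) * gb q n j * y ^ j := by
  intro n
  induction n with
  | zero => simp [gb_zero' hq]
  | succ n ih =>
    rw [Finset.prod_range_succ, ih]
    have hstep : ∀ j ∈ Finset.range (n+1),
        q ^ ((j+1)*j) * gb q (n+1) (j+1) * y ^ (j+1)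
          = q ^ ((j+1)*j) * gb q n (j+1) * y ^ (j+1)
            + (q ^ (j*(j-1)) * gb q n j * y ^ j) * (y * q ^ (2*n)) := by
      intro j hj
      rw [Finset.mem_range] at hj
      obtain ⟨d, rfl⟩ : ∃ d, n = j + d := ⟨n - j, by omega⟩
      rw [show j + d + 1 = j + d + 1 from rfl, gb_pascal hq j d]
      have hexp : q ^ ((j+1)*j) * q ^ (2*d) = q ^ (j*(j-1)) * q ^ (2*(j+d)) := by
        rw [← pow_add, ← pow_add]
        congr 1
        rcases j with _ | i
        · simp
        · simp only [Nat.add_sub_cancel]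
          ring
      calc q ^ ((j+1)*j) * (gb q (j+d) (j+1) + q ^ (2*d) * gb q (j+d) j) * y ^ (j+1)
          = q ^ ((j+1)*j) * gb q (j+d) (j+1) * y ^ (j+1)
            + (q ^ ((j+1)*j) * q ^ (2*d)) * gb q (j+d) j * y ^ (j+1) := by ring
        _ = _ := by rw [hexp]; ring
    calc (∑ j ∈ Finset.range (n+1), q ^ (j*(j-1)) * gb q n j * y ^ j) * (1 + y * q ^ (2*n))
        = (∑ j ∈ Finset.range (n+1), q ^ (j*(j-1)) * gb q n j * y ^ j)
          + ∑ j ∈ Finset.range (n+1), (q ^ (j*(j-1)) * gb q n j * y ^ j) * (y * q ^ (2*n)) := by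
          rw [mul_add, mul_one, Finset.sum_mul]
      _ = (∑ j ∈ Finset.range n, q ^ ((j+1)*j) * gb q n (j+1) * y ^ (j+1)) + 1
          + ∑ j ∈ Finset.range (n+1), (q ^ (j*(j-1)) * gb q n j * y ^ j) * (y * q ^ (2*n)) := by
          rw [Finset.sum_range_succ' (fun j => q ^ (j*(j-1)) * gb q n j * y ^ j) n]
          simp [gb_zero' hq]
      _ = (∑ j ∈ Finset.range (n+1), q ^ ((j+1)*j) * gb q n (j+1) * y ^ (j+1)) + 1
          + ∑ j ∈ Finset.range (n+1), (q ^ (j*(j-1)) * gb q n j * y ^ j) * (y * q ^ (2*n)) := by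
          rw [Finset.sum_range_succ (fun j => q ^ ((j+1)*j) * gb q n (j+1) * y ^ (j+1)) n]
          rw [gb_of_gt (Nat.lt_succ_self n)]
          ring
      _ = (∑ j ∈ Finset.range (n+1), q ^ ((j+1)*j) * gb q (n+1) (j+1) * y ^ (j+1)) + 1 := by
          rw [add_right_comm, ← Finset.sum_add_distrib]
          congr 1
          exact (Finset.sum_congr rfl hstep).symm
      _ = ∑ j ∈ Finset.range (n+1+1), q ^ (j*(j-1)) * gb q (n+1) j * y ^ j := by
          rw [Finset.sum_range_succ' (fun j => q ^ (j*(j-1)) * gb q (n+1) j * y ^ j) (n+1)]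
          simp only [Nat.add_sub_cancel, gb_zero' hq]
          simp

lemma natcast_mul_pred (j : ℕ) : ((j*(j-1) : ℕ) : ℤ) = (j:ℤ)*((j:ℤ)-1) := by
  rcases j with _ | i
  · simp
  · push_cast [Nat.add_sub_cancel]; ring

lemma prod_zpow_neg_odd (hq0 : q ≠ 0) (m : ℕ) :
    ∏ j ∈ Finset.range m, q ^ (-(2*(j:ℤ)+1)) = q ^ (-((m:ℤ)^2)) := by
  induction m with
  | zero => simp
  | succ m ih =>
    rw [Finset.prod_range_succ, ih, ← zpow_add₀ hq0]
    congr 1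
    push_cast
    ring

lemma finite_jtp (hq : ‖q‖ < 1) (hq0 : q ≠ 0) (hx : x ≠ 0) (m : ℕ) :
    ∏ i ∈ Finset.range m, ((1 + q ^ (2*i+1) * x) * (1 + q ^ (2*i+1) * x⁻¹))
      = ∑ j ∈ Finset.range (2*m+1), gb q (2*m) j * q ^ (((j:ℤ)-m)^2) * x ^ ((j:ℤ)-m) := by
  have hxm : x ^ (m:ℕ) ≠ 0 := pow_ne_zero _ hx
  -- step 1: the split product identity
  have split : ∏ k ∈ Finset.range (2*m), (1 + x * q ^ (2*(k:ℤ)+1-2*m))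
      = q ^ (-((m:ℤ)^2)) * x ^ (m:ℕ) *
        ((∏ j ∈ Finset.range m, (1 + x⁻¹ * q ^ (2*j+1))) *
         (∏ i ∈ Finset.range m, (1 + x * q ^ (2*i+1)))) := by
    rw [show 2*m = m + m by ring, Finset.prod_range_add]
    have h2 : ∀ i ∈ Finset.range m,
        (1 + x * q ^ (2*((m+i : ℕ):ℤ)+1-2*(m:ℤ))) = 1 + x * q ^ (2*i+1) := by
      intro i _
      rw [show 2*((m+i : ℕ):ℤ)+1-2*(m:ℤ) = ((2*i+1 : ℕ) : ℤ) by push_cast; ring, zpow_natCast]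
    have h1 : ∏ k ∈ Finset.range m, (1 + x * q ^ (2*((k : ℕ):ℤ)+1-2*(m:ℤ)))
        = q ^ (-((m:ℤ)^2)) * x ^ (m:ℕ) * ∏ j ∈ Finset.range m, (1 + x⁻¹ * q ^ (2*j+1)) := by
      rw [← Finset.prod_range_reflect (fun k => 1 + x * q ^ (2*((k : ℕ):ℤ)+1-2*(m:ℤ))) m]
      have hterm : ∀ j ∈ Finset.range m,
          (1 + x * q ^ (2*((m-1-j : ℕ):ℤ)+1-2*(m:ℤ)))
            = q ^ (-(2*(j:ℤ)+1)) * x * (1 + x⁻¹ * q ^ (2*j+1)) := by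
        intro j hj
        rw [Finset.mem_range] at hj
        rw [show 2*((m-1-j : ℕ):ℤ)+1-2*(m:ℤ) = -(2*(j:ℤ)+1) by omega]
        have hpow : q ^ (2*j+1) = q ^ ((2*(j:ℤ)+1)) := by
          rw [show (2*(j:ℤ)+1) = ((2*j+1 : ℕ) : ℤ) by push_cast; ring, zpow_natCast]
        have hw : q ^ ((2*(j:ℤ)+1)) ≠ 0 := zpow_ne_zero _ hq0
        rw [hpow, zpow_neg]
        field_simp
        ring
      rw [Finset.prod_congr rfl hterm]
      rw [Finset.prod_mul_distrib, Finset.prod_mul_distrib, prod_zpow_neg_odd hq0,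
        Finset.prod_const, Finset.card_range]
    rw [Finset.prod_congr rfl h2, h1]
    ring
  -- step 2: Cauchy with y = x * q^(1-2m)
  have hC := cauchy hq (x * q ^ ((1:ℤ) - 2*(m:ℤ))) (2*m)
  have hCL : ∏ k ∈ Finset.range (2*m), (1 + (x * q ^ ((1:ℤ) - 2*(m:ℤ))) * q ^ (2*k))
      = ∏ k ∈ Finset.range (2*m), (1 + x * q ^ (2*(k:ℤ)+1-2*(m:ℤ))) := by
    apply Finset.prod_congr rfl
    intro k _
    congr 1
    rw [mul_assoc, ← zpow_natCast q (2*k), ← zpow_add₀ hq0]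
    congr 1
    push_cast
    ring
  -- step 3: assemble
  have key : ∑ j ∈ Finset.range (2*m+1), gb q (2*m) j * q ^ (((j:ℤ)-m)^2) * x ^ ((j:ℤ)-m)
      = q ^ ((m:ℤ)^2) * x ^ (-(m:ℤ)) *
        ∑ j ∈ Finset.range (2*m+1), q ^ (j*(j-1)) * gb q (2*m) j * (x * q ^ ((1:ℤ) - 2*(m:ℤ))) ^ j := by
    rw [Finset.mul_sum]
    apply Finset.sum_congr rfl
    intro j _
    rw [mul_pow, ← zpow_natCast x j, ← zpow_natCast (q ^ ((1:ℤ) - 2*(m:ℤ))) j, ← zpow_mul,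
      ← zpow_natCast q (j*(j-1)), natcast_mul_pred]
    have hqq : q ^ ((m:ℤ)^2) * (q ^ ((j:ℤ)*((j:ℤ)-1)) * q ^ ((1-2*(m:ℤ))*(j:ℤ)))
        = q ^ (((j:ℤ)-m)^2) := by
      rw [← zpow_add₀ hq0, ← zpow_add₀ hq0]
      congr 1
      ring
    have hxx : x ^ (-(m:ℤ)) * x ^ ((j:ℤ)) = x ^ ((j:ℤ)-(m:ℤ)) := by
      rw [← zpow_add₀ hx]
      congr 1
      ring
    rw [← hqq, ← hxx]
    ring
  rw [key, ← hC, hCL, split]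
  symm
  have hqm : q ^ ((m:ℤ)^2) ≠ 0 := zpow_ne_zero _ hq0
  have hxm' : x ^ (-(m:ℤ)) ≠ 0 := zpow_ne_zero _ hx
  have c1 : q ^ ((m:ℤ)^2) * q ^ (-((m:ℤ)^2)) = 1 := by
    rw [← zpow_add₀ hq0]; simp
  have c2 : x ^ (-(m:ℤ)) * x ^ (m:ℕ) = 1 := by
    rw [← zpow_natCast x m, ← zpow_add₀ hx]; simp
  calc q ^ ((m:ℤ)^2) * x ^ (-(m:ℤ)) *
        (q ^ (-((m:ℤ)^2)) * x ^ (m:ℕ) *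
          ((∏ j ∈ Finset.range m, (1 + x⁻¹ * q ^ (2*j+1))) *
           (∏ i ∈ Finset.range m, (1 + x * q ^ (2*i+1)))))
      = (q ^ ((m:ℤ)^2) * q ^ (-((m:ℤ)^2))) * (x ^ (-(m:ℤ)) * x ^ (m:ℕ)) *
          ((∏ j ∈ Finset.range m, (1 + x⁻¹ * q ^ (2*j+1))) *
           (∏ i ∈ Finset.range m, (1 + x * q ^ (2*i+1)))) := by ring
    _ = (∏ j ∈ Finset.range m, (1 + x⁻¹ * q ^ (2*j+1))) *
           (∏ i ∈ Finset.range m, (1 + x * q ^ (2*i+1))) := by rw [c1, c2]; ring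
    _ = ∏ i ∈ Finset.range m, ((1 + q ^ (2*i+1) * x) * (1 + q ^ (2*i+1) * x⁻¹)) := by
          rw [← Finset.prod_mul_distrib]
          apply Finset.prod_congr rfl
          intro i _
          ring

lemma weierstrass (a : ℕ → ℝ) (h0 : ∀ i, 0 ≤ a i) (h1 : ∀ i, a i ≤ 1) (s : Finset ℕ) :
    1 - ∑ i ∈ s, a i ≤ ∏ i ∈ s, (1 - a i) := by
  induction s using Finset.cons_induction with
  | empty => simp
  | cons i s his ih =>
    rw [Finset.prod_cons, Finset.sum_cons]
    have hnn : (0:ℝ) ≤ ∏ j ∈ s, (1 - a j) :=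
      Finset.prod_nonneg fun j _ => by linarith [h1 j]
    have hsum : (0:ℝ) ≤ ∑ j ∈ s, a j := Finset.sum_nonneg fun j _ => h0 j
    nlinarith [h0 i, h1 i]

lemma hr2 (hq : ‖q‖ < 1) : ‖q‖^2 < 1 := pow_lt_one₀ (norm_nonneg q) hq (by omega)

lemma gsummable (hq : ‖q‖ < 1) : Summable (fun j : ℕ => ‖q‖^(2*j+2)) := by
  have := (summable_geometric_of_lt_one (by positivity) (hr2 hq)).mul_left (‖q‖^2)
  refine this.congr fun j => ?_
  rw [← pow_mul, ← pow_add]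
  ring_nf

lemma Pfin_norm_ub (hq : ‖q‖ < 1) (n : ℕ) : ‖Pfin q n‖ ≤ Real.exp ((1 - ‖q‖^2)⁻¹) := by
  rw [Pfin, norm_prod]
  calc ∏ j ∈ Finset.range n, ‖1 - q ^ (2*j+2)‖
      ≤ ∏ j ∈ Finset.range n, Real.exp (‖q‖^(2*j+2)) := by
        apply Finset.prod_le_prod (fun j _ => norm_nonneg _)
        intro j _
        calc ‖1 - q ^ (2*j+2)‖ ≤ ‖(1:ℂ)‖ + ‖q ^ (2*j+2)‖ := norm_sub_le _ _
          _ = 1 + ‖q‖^(2*j+2) := by rw [norm_one, norm_pow]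
          _ ≤ Real.exp (‖q‖^(2*j+2)) := by rw [add_comm]; exact Real.add_one_le_exp _
    _ = Real.exp (∑ j ∈ Finset.range n, ‖q‖^(2*j+2)) := by rw [Real.exp_sum]
    _ ≤ Real.exp ((1 - ‖q‖^2)⁻¹) := by
        apply Real.exp_le_exp.mpr
        calc ∑ j ∈ Finset.range n, ‖q‖^(2*j+2) ≤ ∑ j ∈ Finset.range n, (‖q‖^2)^j := by
              apply Finset.sum_le_sum
              intro j _
              rw [show 2*j+2 = 2 + 2*j by ring, pow_add, pow_mul]
              exact mul_le_of_le_one_left (by positivity) (le_of_lt (hr2 hq))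
          _ ≤ ∑' j : ℕ, (‖q‖^2)^j :=
              Summable.sum_le_tsum _ (fun i _ => by positivity)
                (summable_geometric_of_lt_one (by positivity) (hr2 hq))
          _ = (1 - ‖q‖^2)⁻¹ := tsum_geometric_of_lt_one (by positivity) (hr2 hq)

lemma Pfin_norm_lb (hq : ‖q‖ < 1) : ∃ c : ℝ, 0 < c ∧ ∀ n, c ≤ ‖Pfin q n‖ := by
  set g : ℕ → ℝ := fun j => ‖q‖^(2*j+2) with hg
  have hgs : Summable g := gsummable hq
  have hg0 : ∀ j, 0 ≤ g j := fun j => by positivity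
  have hg1 : ∀ j, g j ≤ 1 := fun j =>
    le_of_lt (pow_lt_one₀ (norm_nonneg q) hq (by omega))
  -- choose N with tail ≤ 1/2
  obtain ⟨N, hN⟩ : ∃ N : ℕ, ∑' j, g j - ∑ j ∈ Finset.range N, g j ≤ 1/2 := by
    have ht := hgs.hasSum.tendsto_sum_nat
    have := (Metric.tendsto_atTop.mp ht) (1/2) (by norm_num)
    obtain ⟨N, hN⟩ := this
    refine ⟨N, ?_⟩
    have := hN N le_rfl
    rw [Real.dist_eq, abs_lt] at this
    linarith [this.1]
  have tail_le : ∀ n, N ≤ n → ∑ j ∈ Finset.Ico N n, g j ≤ 1/2 := by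
    intro n hn
    rw [Finset.sum_Ico_eq_sub _ hn]
    have h1 : ∑ j ∈ Finset.range n, g j ≤ ∑' j, g j :=
      Summable.sum_le_tsum _ (fun i _ => hg0 i) hgs
    linarith
  set pN : ℝ := ∏ j ∈ Finset.range N, (1 - g j) with hpN
  have hfac_pos : ∀ j, 0 < 1 - g j := by
    intro j
    have h1 : g j < 1 := by
      rw [hg]
      exact pow_lt_one₀ (norm_nonneg q) hq (by omega)
    linarith
  have hpN_pos : 0 < pN := Finset.prod_pos fun j _ => hfac_pos j
  refine ⟨pN / 2, by positivity, fun n => ?_⟩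
  have hlow : pN / 2 ≤ ∏ j ∈ Finset.range n, (1 - g j) := by
    rcases le_or_gt n N with h | h
    · -- n ≤ N : product over range n ≥ product over range N ≥ pN/2
      have hsplit : pN = (∏ j ∈ Finset.range n, (1 - g j)) * ∏ j ∈ Finset.Ico n N, (1 - g j) := by
        rw [hpN, ← Finset.prod_range_mul_prod_Ico _ h]
      have h2 : ∏ j ∈ Finset.Ico n N, (1 - g j) ≤ 1 :=
        Finset.prod_le_one (fun j _ => le_of_lt (hfac_pos j)) (fun j _ => by linarith [hg0 j])
      have h3 : 0 < ∏ j ∈ Finset.range n, (1 - g j) :=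
        Finset.prod_pos fun j _ => hfac_pos j
      nlinarith
    · -- N < n
      have hsplit : ∏ j ∈ Finset.range n, (1 - g j)
          = pN * ∏ j ∈ Finset.Ico N n, (1 - g j) := by
        rw [hpN, ← Finset.prod_range_mul_prod_Ico _ (le_of_lt h)]
      have h2 : 1 - ∑ j ∈ Finset.Ico N n, g j ≤ ∏ j ∈ Finset.Ico N n, (1 - g j) :=
        weierstrass g hg0 hg1 _
      have h3 := tail_le n (le_of_lt h)
      have h4 : (1:ℝ)/2 ≤ ∏ j ∈ Finset.Ico N n, (1 - g j) := by linarith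
      rw [hsplit]
      nlinarith
  refine hlow.trans ?_
  rw [Pfin, norm_prod]
  apply Finset.prod_le_prod (fun j _ => le_of_lt (hfac_pos j))
  intro j _
  calc 1 - g j = ‖(1:ℂ)‖ - ‖q ^ (2*j+2)‖ := by rw [norm_one, norm_pow]
    _ ≤ ‖1 - q ^ (2*j+2)‖ := norm_sub_norm_le _ _

lemma gb_norm_bound (hq : ‖q‖ < 1) : ∃ C : ℝ, 0 < C ∧ ∀ n k, ‖gb q n k‖ ≤ C := by
  obtain ⟨c, hc, hlb⟩ := Pfin_norm_lb hq
  refine ⟨Real.exp ((1 - ‖q‖^2)⁻¹) / (c * c), by positivity, fun n k => ?_⟩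
  rcases le_or_gt k n with h | h
  · rw [gb, if_pos h, norm_div, norm_mul]
    apply div_le_div₀ (by positivity) (Pfin_norm_ub hq n) (by positivity)
    exact mul_le_mul (hlb k) (hlb (n-k)) (le_of_lt hc) (norm_nonneg _)
  · rw [gb, if_neg (Nat.not_le.mpr h), norm_zero]
    positivity

lemma hasProd_mul {f g : ℕ → ℂ} {a b : ℂ} (hf : HasProd f a) (hg : HasProd g b) :
    HasProd (fun i => f i * g i) (a * b) := by
  have := Filter.Tendsto.mul hf hg
  exact hf.mul hg

lemma summable_q_geom (hq : ‖q‖ < 1) (a b : ℕ) (hb : 0 < b) (y : ℂ) :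
    Summable (fun n : ℕ => q ^ (b*n+a) * y) := by
  have h1 : ‖q ^ b‖ < 1 := by
    rw [norm_pow]
    exact pow_lt_one₀ (norm_nonneg q) hq (by omega)
  have := ((summable_geometric_of_norm_lt_one h1).mul_left (q ^ a)).mul_right y
  refine this.congr fun n => ?_
  rw [← pow_mul, ← pow_add]
  ring_nf

lemma mult_one_sub (hq : ‖q‖ < 1) : Multipliable (fun n : ℕ => 1 - q ^ (2*n+2)) := by
  apply Complex.multipliable_of_summable_log
  exact Summable.clog_one_sub (by simpa using summable_q_geom hq 2 2 (by norm_num) 1)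

lemma tprod_one_sub_ne (hq : ‖q‖ < 1) : (∏' n : ℕ, (1 - q ^ (2*n+2))) ≠ 0 := by
  have := Complex.cexp_tsum_eq_tprod (f := fun n => 1 - q ^ (2*n+2))
    (fun n => fac_ne hq n)
    (Summable.clog_one_sub (by simpa using summable_q_geom hq 2 2 (by norm_num) 1))
  rw [← this]
  exact Complex.exp_ne_zero _

lemma Pfin_tendsto (hq : ‖q‖ < 1) :
    Tendsto (fun N => Pfin q N) atTop (𝓝 (∏' n : ℕ, (1 - q ^ (2*n+2)))) :=
  (mult_one_sub hq).hasProd.tendsto_prod_nat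

theorem jtp (hq : ‖q‖ < 1) (hq0 : q ≠ 0) (hx : x ≠ 0)
    (hs : Summable fun n : ℤ => ‖q ^ (n^2) * x ^ n‖) :
    ∏' i : ℕ, ((1 + q ^ (2*i+1) * x) * (1 + q ^ (2*i+1) * x⁻¹))
      = (∑' n : ℤ, q ^ (n^2) * x ^ n) / (∏' n : ℕ, (1 - q ^ (2*n+2))) := by
  set P : ℂ := ∏' n : ℕ, (1 - q ^ (2*n+2)) with hP
  have hPne : P ≠ 0 := tprod_one_sub_ne hq
  -- Multipliability of the pair product
  have hmult : Multipliable (fun i : ℕ => (1 + q ^ (2*i+1) * x) * (1 + q ^ (2*i+1) * x⁻¹)) := by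
    by_cases hz : ∀ i : ℕ, (1 + q ^ (2*i+1) * x) * (1 + q ^ (2*i+1) * x⁻¹) ≠ 0
    · have h1 : Multipliable (fun i : ℕ => 1 + q ^ (2*i+1) * x) := by
        apply Complex.multipliable_of_summable_log
        have h2 := Summable.clog_one_sub (f := fun i : ℕ => -(q ^ (2*i+1) * x))
          (by simpa using (summable_q_geom hq 1 2 two_pos x).neg)
        exact h2.congr fun i => by rw [sub_neg_eq_add]
      have h2 : Multipliable (fun i : ℕ => 1 + q ^ (2*i+1) * x⁻¹) := by
        apply Complex.multipliable_of_summable_log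
        have h2 := Summable.clog_one_sub (f := fun i : ℕ => -(q ^ (2*i+1) * x⁻¹))
          (by simpa using (summable_q_geom hq 1 2 two_pos x⁻¹).neg)
        exact h2.congr fun i => by rw [sub_neg_eq_add]
      exact ⟨_, hasProd_mul h1.hasProd h2.hasProd⟩
    · push_neg at hz
      obtain ⟨i₀, h0⟩ := hz
      refine ⟨0, ?_⟩
      have hev : ∀ᶠ s : Finset ℕ in atTop,
          ∏ i ∈ s, ((1 + q ^ (2*i+1) * x) * (1 + q ^ (2*i+1) * x⁻¹)) = 0 := by
        filter_upwards [Filter.eventually_ge_atTop ({i₀} : Finset ℕ)] with s hs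
        exact Finset.prod_eq_zero (hs (Finset.mem_singleton_self i₀)) h0
      exact Tendsto.congr' (hev.mono fun s h => h.symm) tendsto_const_nhds
  -- The truncated sums
  set G : ℕ → ℤ → ℂ := fun m n =>
    if n.natAbs ≤ m then gb q (2*m) (n + (m:ℤ)).toNat * (q ^ (n^2) * x ^ n) else 0 with hG
  have hGsum : ∀ m : ℕ, (∑' n : ℤ, G m n)
      = ∑ j ∈ Finset.range (2*m+1), gb q (2*m) j * q ^ (((j:ℤ)-m)^2) * x ^ ((j:ℤ)-m) := by
    intro m
    have einj : Function.Injective (fun j : ℕ => (j:ℤ) - m) := fun a b h => by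
      simp only at h; omega
    rw [tsum_eq_sum (s := (Finset.range (2*m+1)).map ⟨fun j : ℕ => (j:ℤ) - m, einj⟩) ?_]
    · rw [Finset.sum_map]
      apply Finset.sum_congr rfl
      intro j hj
      rw [Finset.mem_range] at hj
      simp only [hG, Function.Embedding.coeFn_mk]
      rw [if_pos (by omega : ((j:ℤ) - m).natAbs ≤ m),
        show ((j:ℤ) - m + m).toNat = j by omega]
      ring
    · intro n hn
      simp only [hG]
      rw [if_neg]
      intro hcon
      apply hn
      simp only [Finset.mem_map, Finset.mem_range, Function.Embedding.coeFn_mk]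
      exact ⟨(n + (m:ℤ)).toNat, by omega, by omega⟩
  -- uniform bound
  obtain ⟨C, hC, hgbC⟩ := gb_norm_bound hq
  have hBD : ∀ m : ℕ, ∀ n : ℤ, ‖G m n‖ ≤ C * ‖q ^ (n^2) * x ^ n‖ := by
    intro m n
    simp only [hG]
    split_ifs with h
    · rw [norm_mul]
      exact mul_le_mul_of_nonneg_right (hgbC _ _) (norm_nonneg _)
    · rw [norm_zero]
      positivity
  -- pointwise limits
  have hlim : ∀ n : ℤ, Tendsto (fun m => G m n) atTop (𝓝 (P⁻¹ * (q ^ (n^2) * x ^ n))) := by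
    intro n
    have h2m : Tendsto (fun m : ℕ => 2*m) atTop atTop :=
      tendsto_atTop_atTop.mpr fun b => ⟨b, fun a ha => by omega⟩
    have ha : Tendsto (fun m : ℕ => (n + (m:ℤ)).toNat) atTop atTop :=
      tendsto_atTop_atTop.mpr fun b => ⟨b + n.natAbs, fun a ha' => by omega⟩
    have hb : Tendsto (fun m : ℕ => ((m:ℤ) - n).toNat) atTop atTop :=
      tendsto_atTop_atTop.mpr fun b => ⟨b + n.natAbs, fun a ha' => by omega⟩
    have hratio : Tendsto (fun m : ℕ =>
        Pfin q (2*m) / (Pfin q ((n + (m:ℤ)).toNat) * Pfin q (((m:ℤ) - n).toNat)))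
        atTop (𝓝 (P / (P * P))) :=
      ((Pfin_tendsto hq).comp h2m).div
        (((Pfin_tendsto hq).comp ha).mul ((Pfin_tendsto hq).comp hb))
        (mul_ne_zero hPne hPne)
    have hPPP : P / (P * P) = P⁻¹ := by field_simp
    rw [hPPP] at hratio
    have heq : ∀ᶠ m : ℕ in atTop,
        Pfin q (2*m) / (Pfin q ((n + (m:ℤ)).toNat) * Pfin q (((m:ℤ) - n).toNat))
          * (q ^ (n^2) * x ^ n) = G m n := by
      rw [eventually_atTop]
      refine ⟨n.natAbs, fun m hm => ?_⟩
      simp only [hG]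
      rw [if_pos (by omega : n.natAbs ≤ m), gb_eq (by omega : (n + (m:ℤ)).toNat ≤ 2*m),
        show 2*m - (n + (m:ℤ)).toNat = ((m:ℤ) - n).toNat by omega]
    exact (hratio.mul_const (q ^ (n^2) * x ^ n)).congr' heq
  -- dominated convergence
  have htt : Tendsto (fun m => ∑' n : ℤ, G m n) atTop
      (𝓝 (∑' n : ℤ, P⁻¹ * (q ^ (n^2) * x ^ n))) :=
    tendsto_tsum_of_dominated_convergence (hs.mul_left C) hlim (Eventually.of_forall hBD)
  rw [tsum_mul_left] at htt
  -- partial products converge to the tprod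
  have hprod : Tendsto (fun m => ∏ i ∈ Finset.range m,
      ((1 + q ^ (2*i+1) * x) * (1 + q ^ (2*i+1) * x⁻¹))) atTop
      (𝓝 (∏' i : ℕ, ((1 + q ^ (2*i+1) * x) * (1 + q ^ (2*i+1) * x⁻¹)))) :=
    hmult.hasProd.tendsto_prod_nat
  have hfun : (fun m => ∏ i ∈ Finset.range m,
      ((1 + q ^ (2*i+1) * x) * (1 + q ^ (2*i+1) * x⁻¹))) = fun m => ∑' n : ℤ, G m n := by
    funext m
    rw [finite_jtp hq hq0 hx m, hGsum m]
  rw [hfun] at hprod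
  have := tendsto_nhds_unique hprod htt
  rw [this, inv_mul_eq_div]

/-- Theta-function expression of the glued even-index superpotential `W₂′`:
with `q = e^{2πiτ}`, `q₁ = e^{2πiτ₁}`, `z = e^{2πiζ}` and `Im τ > 0`,
`∏_{i=1}^∞ (1 + q^{2i−1} q₁ z⁻²)(1 + q^{2i−1} q₁⁻¹ z²)
  = (e^{πiτ/6}/η(2τ)) · ϑ_{0,0}(2ζ − τ₁, 2τ)`. -/
theorem glued_superpotential_theta_even (τ τ₁ ζ q q₁ z : ℂ) (hτ : 0 < τ.im)
    (hq : q = Complex.exp (2 * Real.pi * Complex.I * τ))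
    (hq₁ : q₁ = Complex.exp (2 * Real.pi * Complex.I * τ₁))
    (hz : z = Complex.exp (2 * Real.pi * Complex.I * ζ)) :
    (∏' i : ℕ, (1 + q ^ (2 * i + 1) * q₁ * (z ^ 2)⁻¹) * (1 + q ^ (2 * i + 1) * q₁⁻¹ * z ^ 2))
      = Complex.exp (Real.pi * Complex.I * τ / 6) / dedekindEta (2 * τ) *
          jTheta 0 0 (2 * ζ - τ₁) (2 * τ) := by
  have hq0 : q ≠ 0 := by rw [hq]; exact Complex.exp_ne_zero _
  have hq1ne : q₁ ≠ 0 := by rw [hq₁]; exact Complex.exp_ne_zero _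
  have hzne : z ≠ 0 := by rw [hz]; exact Complex.exp_ne_zero _
  set x : ℂ := q₁⁻¹ * z ^ 2 with hxdef
  have hx : x ≠ 0 := mul_ne_zero (inv_ne_zero hq1ne) (pow_ne_zero _ hzne)
  have hre : (2 * (Real.pi:ℂ) * Complex.I * τ).re = -(2 * Real.pi * τ.im) := by
    simp [Complex.mul_re, Complex.mul_im]
  have hqlt : ‖q‖ < 1 := by
    rw [hq, Complex.norm_exp, hre]
    apply Real.exp_lt_one_iff.mpr
    have := Real.pi_pos
    nlinarith
  set w : ℂ := 2 * ζ - τ₁ with hwdef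
  -- key term identification
  have hterm : ∀ n : ℤ, q ^ (n^2) * x ^ n = jacobiTheta₂_term n w (2 * τ) := by
    intro n
    have h1 : q ^ (n^2) = Complex.exp (Real.pi * Complex.I * (n:ℂ)^2 * (2*τ)) := by
      rw [hq, ← Complex.exp_int_mul]
      congr 1
      push_cast
      ring
    have hxexp : x = Complex.exp (2 * Real.pi * Complex.I * w) := by
      rw [hxdef, hq₁, hz, ← Complex.exp_neg, ← Complex.exp_nat_mul, ← Complex.exp_add]
      congr 1
      rw [hwdef]
      push_cast
      ring
    have h2 : x ^ n = Complex.exp (2 * Real.pi * Complex.I * (n:ℂ) * w) := by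
      rw [hxexp, ← Complex.exp_int_mul]
      congr 1
      ring
    rw [h1, h2, jacobiTheta₂_term, ← Complex.exp_add]
    congr 1
    ring
  have h2im : 0 < (2 * τ).im := by
    have : (2 * τ).im = 2 * τ.im := by simp [Complex.mul_im]
    rw [this]; linarith
  -- summability
  have hs : Summable fun n : ℤ => ‖q ^ (n^2) * x ^ n‖ := by
    have hb := summable_pow_mul_jacobiTheta₂_term_bound |w.im| h2im 0
    apply Summable.of_nonneg_of_le (fun n => norm_nonneg _) (fun n => ?_)
      (by simpa using hb)
    rw [hterm n]
    simpa using norm_jacobiTheta₂_term_le h2im (le_refl |w.im|) (le_refl (2*τ).im) n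
  -- apply JTP
  have hmain := jtp hqlt hq0 hx hs
  have hL : (∏' i : ℕ, (1 + q ^ (2 * i + 1) * q₁ * (z ^ 2)⁻¹) * (1 + q ^ (2 * i + 1) * q₁⁻¹ * z ^ 2))
      = ∏' i : ℕ, ((1 + q ^ (2*i+1) * x) * (1 + q ^ (2*i+1) * x⁻¹)) := by
    apply tprod_congr
    intro i
    rw [hxdef, mul_inv, inv_inv]
    ring
  have hTheta : (∑' n : ℤ, q ^ (n^2) * x ^ n) = jTheta 0 0 w (2 * τ) := by
    apply tsum_congr
    intro n
    rw [hterm n, jacobiTheta₂_term, ← Complex.exp_add]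
    push_cast
    congr 1
    ring
  have hEta : dedekindEta (2 * τ)
      = Complex.exp (Real.pi * Complex.I * τ / 6) * ∏' n : ℕ, (1 - q ^ (2*n+2)) := by
    rw [dedekindEta]
    congr 1
    · congr 1
      ring
    · apply tprod_congr
      intro m
      congr 1
      rw [hq, ← Complex.exp_nat_mul]
      congr 1
      push_cast
      ring
  rw [hL, hmain, hTheta, hEta]
  rw [div_mul_eq_div_div]
  field_simp [Complex.exp_ne_zero]
end

section
/- Let q, u be complex numbers with 0 < |q| < 1 and u ≠ 0. Then Θ(u, q) and Θ(u/q, q) are not both zero, where Θ(u,q) = Σ_{l∈ℤ} q^{l²} u^l. Consequently, for q, q₁, q₂, z nonzero with q = q₁q₂ and 0 < |q| < 1, the pair (Σ_{l∈ℤ} q^{l²}(q₂z²)^l, Σ_{l∈ℤ} q^{l²}(z²/q₁)^l) is never (0,0). -/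
open Complex Real

namespace ThetaAux

lemma summable_norm_term {z τ : ℂ} (hτ : 0 < im τ) :
    Summable fun n : ℤ => ‖jacobiTheta₂_term n z τ‖ := by
  apply Summable.of_nonneg_of_le (fun _ => norm_nonneg _)
    (fun n => norm_jacobiTheta₂_term_le hτ (le_refl |im z|) (le_refl (im τ)) n)
  simpa using summable_pow_mul_jacobiTheta₂_term_bound |im z| hτ 0

lemma summable_term {z τ : ℂ} (hτ : 0 < im τ) :
    Summable fun n : ℤ => jacobiTheta₂_term n z τ :=
  (summable_jacobiTheta₂_term_iff z τ).mpr hτ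

lemma hasSum_parity_split {F : ℤ × ℤ → ℂ} {A B : ℂ}
    (h0 : HasSum (fun p : ℤ × ℤ => F (p.1 + p.2, p.1 - p.2)) A)
    (h1 : HasSum (fun p : ℤ × ℤ => F (p.1 + p.2 + 1, p.1 - p.2)) B) :
    HasSum F (A + B) := by
  set g₀ : ℤ × ℤ → ℤ × ℤ := fun p => (p.1 + p.2, p.1 - p.2) with hg₀
  set g₁ : ℤ × ℤ → ℤ × ℤ := fun p => (p.1 + p.2 + 1, p.1 - p.2) with hg₁
  have hi₀ : Function.Injective g₀ := by
    rintro ⟨a, b⟩ ⟨c, d⟩ h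
    simp only [hg₀, Prod.mk.injEq] at h
    have : a = c ∧ b = d := ⟨by omega, by omega⟩
    simp [this.1, this.2]
  have hi₁ : Function.Injective g₁ := by
    rintro ⟨a, b⟩ ⟨c, d⟩ h
    simp only [hg₁, Prod.mk.injEq] at h
    have : a = c ∧ b = d := ⟨by omega, by omega⟩
    simp [this.1, this.2]
  have hcompl : IsCompl (Set.range g₀) (Set.range g₁) := by
    constructor
    · rw [Set.disjoint_iff_inter_eq_empty]
      ext ⟨l, m⟩
      simp only [Set.mem_inter_iff, Set.mem_range, Prod.exists, Set.mem_empty_iff_false,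
        iff_false, not_and]
      rintro ⟨a, b, hab⟩ ⟨c, d, hcd⟩
      simp only [hg₀, hg₁, Prod.mk.injEq] at hab hcd
      omega
    · rw [codisjoint_iff_le_sup]
      rintro ⟨l, m⟩ -
      rcases Int.even_or_odd (l + m) with ⟨k, hk⟩ | ⟨k, hk⟩
      · exact Or.inl ⟨(k, l - k), by simp only [hg₀, Prod.mk.injEq]; omega⟩
      · exact Or.inr ⟨(k, l - 1 - k), by simp only [hg₁, Prod.mk.injEq]; omega⟩
  exact (hi₀.hasSum_range_iff.mpr h0).add_isCompl hcompl (hi₁.hasSum_range_iff.mpr h1)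

end ThetaAux

namespace ThetaAux

lemma hasSum_theta_mul {z w τ : ℂ} (hτ : 0 < im τ) :
    HasSum (fun p : ℤ × ℤ => jacobiTheta₂_term p.1 z τ * jacobiTheta₂_term p.2 w τ)
      (jacobiTheta₂ z τ * jacobiTheta₂ w τ) := by
  have hs := summable_mul_of_summable_norm (summable_norm_term hτ (z := z))
    (summable_norm_term hτ (z := w))
  have h := hs.hasSum
  rwa [← tsum_mul_tsum_of_summable_norm (summable_norm_term hτ (z := z))
    (summable_norm_term hτ (z := w))] at h

/-- The key "addition/duplication" identity for products of theta functions. -/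
theorem theta_mul (z w τ : ℂ) (hτ : 0 < im τ) :
    jacobiTheta₂ z τ * jacobiTheta₂ w τ =
      jacobiTheta₂ (z + w) (2 * τ) * jacobiTheta₂ (z - w) (2 * τ)
      + cexp (π * I * τ + 2 * π * I * z) *
        (jacobiTheta₂ (z + w + τ) (2 * τ) * jacobiTheta₂ (z - w + τ) (2 * τ)) := by
  have h2τ : 0 < im (2 * τ) := by simp only [mul_im, ofReal_re]; simp; linarith
  have h0 : HasSum (fun p : ℤ × ℤ =>
      jacobiTheta₂_term (p.1 + p.2) z τ * jacobiTheta₂_term (p.1 - p.2) w τ)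
      (jacobiTheta₂ (z + w) (2 * τ) * jacobiTheta₂ (z - w) (2 * τ)) := by
    refine (hasSum_theta_mul h2τ).congr_fun fun p => ?_
    simp only [jacobiTheta₂_term, ← Complex.exp_add]
    congr 1
    push_cast
    ring
  have h1 : HasSum (fun p : ℤ × ℤ =>
      jacobiTheta₂_term (p.1 + p.2 + 1) z τ * jacobiTheta₂_term (p.1 - p.2) w τ)
      (cexp (π * I * τ + 2 * π * I * z) *
        (jacobiTheta₂ (z + w + τ) (2 * τ) * jacobiTheta₂ (z - w + τ) (2 * τ))) := by
    refine ((hasSum_theta_mul h2τ).mul_left (cexp (π * I * τ + 2 * π * I * z))).congr_fun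
      fun p => ?_
    simp only [jacobiTheta₂_term, ← Complex.exp_add]
    congr 1
    push_cast
    ring
  have hmain := hasSum_parity_split
    (F := fun p : ℤ × ℤ => jacobiTheta₂_term p.1 z τ * jacobiTheta₂_term p.2 w τ) h0 h1
  exact ((hasSum_theta_mul hτ).unique hmain)

end ThetaAux

namespace ThetaAux

/-- The θ₁-type vanishing: `θ(τ + 1/2, 2τ) = 0` by pairing `n ↔ -1-n`. -/
theorem theta_half_add_vanish (τ : ℂ) : jacobiTheta₂ (τ + 1/2) (2 * τ) = 0 := by
  set f : ℤ → ℂ := fun n => jacobiTheta₂_term n (τ + 1/2) (2 * τ) with hf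
  have key : ∀ n : ℤ, f (-n + -1) = -f n := by
    intro n
    simp only [hf, jacobiTheta₂_term]
    rw [show (2 * π * I * (-n + -1 : ℤ) * (τ + 1/2) + π * I * ((-n + -1 : ℤ) : ℂ) ^ 2 * (2 * τ))
        = ((-n - 1 : ℤ) : ℂ) * (2 * π * I) +
          (π * I + (2 * π * I * n * (τ + 1/2) + π * I * (n : ℂ) ^ 2 * (2 * τ))) by
      push_cast; ring]
    rw [Complex.exp_add, Complex.exp_int_mul, Complex.exp_two_pi_mul_I, one_zpow, one_mul,
      Complex.exp_add, Complex.exp_pi_mul_I]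
    ring
  let e : ℤ ≃ ℤ := (Equiv.neg ℤ).trans (Equiv.addRight (-1))
  have he : ∀ n : ℤ, e n = -n + -1 := fun n => by
    simp [e, Equiv.trans_apply, Equiv.neg_apply, Equiv.coe_addRight]
  have h1 : jacobiTheta₂ (τ + 1/2) (2 * τ) = ∑' n, f (e n) := (e.tsum_eq f).symm
  have h2 : ∑' n, f (e n) = -jacobiTheta₂ (τ + 1/2) (2 * τ) := by
    rw [show (fun n => f (e n)) = fun n => -f n by funext n; rw [he, key]]
    rw [tsum_neg]
    rfl
  have := h1.trans h2
  linear_combination this / 2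

/-- Quasi-periodicity as a zero-set statement. -/
lemma theta_zero_add_iff (z τ : ℂ) :
    jacobiTheta₂ (z + τ) τ = 0 ↔ jacobiTheta₂ z τ = 0 := by
  rw [jacobiTheta₂_add_left', mul_eq_zero]
  simp [Complex.exp_ne_zero]

lemma theta_zero_shift {z τ : ℂ} (h : jacobiTheta₂ z τ = 0) (k : ℤ) :
    jacobiTheta₂ (z + k * τ) τ = 0 := by
  induction k using Int.induction_on with
  | zero => simpa using h
  | succ n ih =>
      have : z + (n + 1 : ℤ) * τ = (z + n * τ) + τ := by push_cast; ring
      rw [this, theta_zero_add_iff]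
      exact ih
  | pred n ih =>
      apply (theta_zero_add_iff _ τ).mp
      convert ih using 2
      push_cast; ring

end ThetaAux

namespace ThetaAux

lemma theta_one_eq (σ : ℂ) : jacobiTheta₂ 1 σ = jacobiTheta₂ 0 σ := by
  simpa using jacobiTheta₂_add_left 0 σ

lemma theta_one_add_eq (σ τ' : ℂ) : jacobiTheta₂ (1 + τ') σ = jacobiTheta₂ τ' σ := by
  rw [add_comm]; exact jacobiTheta₂_add_left τ' σ

/-- `θ(1/2,τ)² = θ(0,2τ)² - e^{πiτ} θ(τ,2τ)²`. -/
lemma K3 {τ : ℂ} (hτ : 0 < im τ) :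
    jacobiTheta₂ (1/2) τ * jacobiTheta₂ (1/2) τ =
      jacobiTheta₂ 0 (2 * τ) * jacobiTheta₂ 0 (2 * τ)
      - cexp (π * I * τ) * (jacobiTheta₂ τ (2 * τ) * jacobiTheta₂ τ (2 * τ)) := by
  have h := theta_mul (1/2) (1/2) τ hτ
  rw [sub_self, zero_add, show (1/2 + 1/2 : ℂ) = 1 by norm_num, theta_one_eq,
    theta_one_add_eq, show (π * I * τ + 2 * π * I * (1/2 : ℂ)) = π * I * τ + π * I by ring,
    Complex.exp_add, Complex.exp_pi_mul_I] at h
  rw [h]; ring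

/-- `θ(0,τ)·θ(1/2,τ) = θ(1/2,2τ)²`. -/
lemma K4 {τ : ℂ} (hτ : 0 < im τ) :
    jacobiTheta₂ 0 τ * jacobiTheta₂ (1/2) τ =
      jacobiTheta₂ (1/2) (2 * τ) * jacobiTheta₂ (1/2) (2 * τ) := by
  have h := theta_mul 0 (1/2) τ hτ
  have hv : jacobiTheta₂ (0 - 1/2 + τ) (2 * τ) = 0 := by
    rw [show (0 - 1/2 + τ : ℂ) = τ - 1/2 by ring, ← theta_one_add_eq (2 * τ) (τ - 1/2),
      show (1 + (τ - 1/2) : ℂ) = τ + 1/2 by ring]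
    exact theta_half_add_vanish τ
  rw [hv, zero_add, show (0 - 1/2 : ℂ) = -(1/2) by ring, jacobiTheta₂_neg_left] at h
  simpa using h

/-- `θ(τ/2,τ)² = 2·θ(0,2τ)·θ(τ,2τ)`. -/
lemma K5 {τ : ℂ} (hτ : 0 < im τ) :
    jacobiTheta₂ (τ/2) τ * jacobiTheta₂ (τ/2) τ =
      2 * (jacobiTheta₂ 0 (2 * τ) * jacobiTheta₂ τ (2 * τ)) := by
  have h := theta_mul (τ/2) (τ/2) τ hτ
  have h2 : jacobiTheta₂ (2 * τ) (2 * τ) = cexp (-π * I * (2 * τ)) * jacobiTheta₂ 0 (2 * τ) := by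
    have := jacobiTheta₂_add_left' 0 (2 * τ)
    rw [zero_add] at this
    rw [this]; ring_nf
  rw [sub_self, zero_add, show (τ/2 + τ/2 : ℂ) = τ by ring,
    show (τ + τ : ℂ) = 2 * τ by ring, h2,
    show (π * I * τ + 2 * π * I * (τ/2) : ℂ) = 2 * π * I * τ by ring] at h
  have e : cexp (2 * π * I * τ) * cexp (-π * I * (2 * τ)) = 1 := by
    rw [← Complex.exp_add, show (2 * π * I * τ + -π * I * (2 * τ) : ℂ) = 0 by ring,
      Complex.exp_zero]
  rw [h]
  linear_combination (jacobiTheta₂ 0 (2 * τ) * jacobiTheta₂ τ (2 * τ)) * e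

end ThetaAux

namespace ThetaAux

lemma norm_term_le {z τ : ℂ} (hτ : 0 < im τ) (n : ℤ) (hn : n ≠ 0) :
    ‖jacobiTheta₂_term n z τ‖ ≤ rexp (-π * τ.im + 2 * π * |z.im|) ^ n.natAbs := by
  rw [norm_jacobiTheta₂_term, ← Real.exp_nat_mul, Real.exp_le_exp]
  set k : ℕ := n.natAbs with hk
  have hk1 : (1 : ℝ) ≤ (k : ℝ) := by
    have : 0 < k := Int.natAbs_pos.mpr hn
    exact_mod_cast this
  have habs : |(n : ℝ)| = (k : ℝ) := by
    rw [hk, Nat.cast_natAbs]; norm_cast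
  have h2 : ((n : ℝ)) ^ 2 = (k : ℝ) ^ 2 := by rw [← _root_.sq_abs, habs]
  have h3 : -((n : ℝ) * z.im) ≤ (k : ℝ) * |z.im| := by
    calc -((n : ℝ) * z.im) ≤ |(n : ℝ) * z.im| := neg_le_abs _
    _ = (k : ℝ) * |z.im| := by rw [abs_mul, habs]
  nlinarith [mul_pos pi_pos hτ, h2, hk1, h3, pi_pos,
    mul_nonneg (mul_pos pi_pos hτ).le
      (mul_nonneg (zero_le_one.trans hk1) (sub_nonneg.2 hk1)),
    mul_nonneg (by positivity : (0:ℝ) ≤ 2 * π) (by linarith : 0 ≤ (k : ℝ) * |z.im| + n * z.im)]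

end ThetaAux

namespace ThetaAux

lemma geom_tail_bound {x : ℝ} (hx0 : 0 ≤ x) (hx : x < 1) {g : ℕ → ℂ}
    (hg : Summable g) (hgb : ∀ n : ℕ, ‖g n‖ ≤ x ^ (n + 1)) :
    ‖∑' n : ℕ, g n‖ ≤ x * (1 - x)⁻¹ := by
  have hgn : Summable fun n : ℕ => ‖g n‖ := summable_norm_iff.mpr hg
  have hsum : Summable fun n : ℕ => x ^ (n + 1) :=
    (summable_geometric_of_lt_one hx0 hx).comp_injective (add_left_injective 1)
  calc ‖∑' n : ℕ, g n‖ ≤ ∑' n : ℕ, ‖g n‖ := norm_tsum_le_tsum_norm hgn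
  _ ≤ ∑' n : ℕ, x ^ (n + 1) := Summable.tsum_le_tsum hgb hgn hsum
  _ = x * ∑' n : ℕ, x ^ n := by
      rw [← tsum_mul_left]
      exact tsum_congr fun n => by rw [pow_succ']
  _ = x * (1 - x)⁻¹ := by rw [tsum_geometric_of_lt_one hx0 hx]

/-- Quantitative nonvanishing of `jacobiTheta₂`. -/
lemma theta_ne_zero_of_bound {z τ : ℂ} (hτ : 0 < im τ)
    (hx : rexp (-π * τ.im + 2 * π * |z.im|) < 1/3) : jacobiTheta₂ z τ ≠ 0 := by
  set x := rexp (-π * τ.im + 2 * π * |z.im|) with hxdef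
  have hx0 : 0 ≤ x := Real.exp_nonneg _
  have hx1 : x < 1 := by linarith
  set f : ℤ → ℂ := fun n => jacobiTheta₂_term n z τ with hf
  have hS : Summable f := summable_term hτ
  have hS1 : Summable fun n : ℕ => f n := hS.comp_injective Nat.cast_injective
  have hS2 : Summable fun n : ℕ => f (-(n + 1)) := by
    apply hS.comp_injective (i := fun n : ℕ => (-(n + 1) : ℤ))
    intro a b h
    simpa using h
  have hS1' : Summable fun n : ℕ => f ((n : ℤ) + 1) := by
    apply hS.comp_injective (i := fun n : ℕ => ((n : ℤ) + 1))
    intro a b h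
    simpa using h
  have hsplit : jacobiTheta₂ z τ = (∑' n : ℕ, f n) + ∑' n : ℕ, f (-(n + 1)) :=
    tsum_of_nat_of_neg_add_one hS1 hS2
  have hzero : f 0 = 1 := by simp [hf, jacobiTheta₂_term]
  have hsplit1 : (∑' n : ℕ, f n) = 1 + ∑' n : ℕ, f ((n : ℤ) + 1) := by
    rw [Summable.tsum_eq_zero_add hS1]
    have hc : ∀ n : ℕ, f (((n + 1 : ℕ) : ℤ)) = f ((n : ℤ) + 1) := fun n => by push_cast; rfl
    rw [Nat.cast_zero, hzero, tsum_congr hc]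
  have hb1 : ∀ n : ℕ, ‖f ((n : ℤ) + 1)‖ ≤ x ^ (n + 1) := by
    intro n
    have h := norm_term_le (z := z) hτ ((n : ℤ) + 1) (by omega)
    rwa [show ((n : ℤ) + 1).natAbs = n + 1 by omega] at h
  have hb2 : ∀ n : ℕ, ‖f (-((n : ℤ) + 1))‖ ≤ x ^ (n + 1) := by
    intro n
    have h := norm_term_le (z := z) hτ (-((n : ℤ) + 1)) (by omega)
    rwa [show (-((n : ℤ) + 1)).natAbs = n + 1 by omega] at h
  have hR1 : ‖∑' n : ℕ, f ((n : ℤ) + 1)‖ ≤ x * (1 - x)⁻¹ := geom_tail_bound hx0 hx1 hS1' hb1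
  have hR2 : ‖∑' n : ℕ, f (-((n : ℤ) + 1))‖ ≤ x * (1 - x)⁻¹ := geom_tail_bound hx0 hx1 hS2 hb2
  intro hcontra
  rw [hsplit, hsplit1] at hcontra
  have h1 : (1 : ℂ) = -(∑' n : ℕ, f ((n : ℤ) + 1)) - ∑' n : ℕ, f (-((n : ℤ) + 1)) := by
    linear_combination hcontra
  have h2 := congrArg norm h1
  rw [norm_one] at h2
  have hle : ‖-(∑' n : ℕ, f ((n : ℤ) + 1)) - ∑' n : ℕ, f (-((n : ℤ) + 1))‖ ≤
      2 * (x * (1 - x)⁻¹) := by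
    calc ‖-(∑' n : ℕ, f ((n : ℤ) + 1)) - ∑' n : ℕ, f (-((n : ℤ) + 1))‖
        ≤ ‖-(∑' n : ℕ, f ((n : ℤ) + 1))‖ + ‖∑' n : ℕ, f (-((n : ℤ) + 1))‖ := norm_sub_le _ _
    _ ≤ x * (1 - x)⁻¹ + x * (1 - x)⁻¹ := by rw [norm_neg]; exact add_le_add hR1 hR2
    _ = 2 * (x * (1 - x)⁻¹) := by ring
  rw [← h2] at hle
  have h1x : 0 < 1 - x := by linarith
  have hfrac : x / (1 - x) < 1/2 := by rw [div_lt_iff₀ h1x]; linarith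
  rw [← div_eq_mul_inv] at hle
  linarith

end ThetaAux

namespace ThetaAux

lemma theta_half_tau_ne_zero_of_bound {τ : ℂ} (hτ : 0 < im τ)
    (hy : rexp (-π * τ.im) < 1/2) : jacobiTheta₂ (τ/2) τ ≠ 0 := by
  set y := rexp (-π * τ.im) with hydef
  have hy0 : 0 ≤ y := Real.exp_nonneg _
  have hy1 : y < 1 := by linarith
  set f : ℤ → ℂ := fun n => jacobiTheta₂_term n (τ/2) τ with hf
  have hS : Summable f := summable_term hτ
  have hS1 : Summable fun n : ℕ => f n := hS.comp_injective Nat.cast_injective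
  have hS2 : Summable fun n : ℕ => f (-(n + 1)) := by
    apply hS.comp_injective (i := fun n : ℕ => (-(n + 1) : ℤ))
    intro a b h
    simpa using h
  have hS1' : Summable fun n : ℕ => f ((n : ℤ) + 1) := by
    apply hS.comp_injective (i := fun n : ℕ => ((n : ℤ) + 1))
    intro a b h
    simpa using h
  have hsym : ∀ n : ℕ, f (-((n : ℤ) + 1)) = f n := by
    intro n
    simp only [hf, jacobiTheta₂_term]
    congr 1
    push_cast
    ring
  have hsplit : jacobiTheta₂ (τ/2) τ = 2 * ∑' n : ℕ, f n := by
    have h := tsum_of_nat_of_neg_add_one hS1 hS2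
    rw [tsum_congr hsym] at h
    rw [show jacobiTheta₂ (τ/2) τ = ∑' n : ℤ, f n from rfl, h]; ring
  have hzero : f 0 = 1 := by simp [hf, jacobiTheta₂_term]
  have hsplit1 : (∑' n : ℕ, f n) = 1 + ∑' n : ℕ, f ((n : ℤ) + 1) := by
    rw [Summable.tsum_eq_zero_add hS1]
    have hc : ∀ n : ℕ, f (((n + 1 : ℕ) : ℤ)) = f ((n : ℤ) + 1) := fun n => by push_cast; rfl
    rw [Nat.cast_zero, hzero, tsum_congr hc]
  have him : (τ/2 : ℂ).im = τ.im / 2 := by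
    simp [Complex.div_im, Complex.normSq_apply]
  have hb : ∀ n : ℕ, ‖f ((n : ℤ) + 1)‖ ≤ y ^ (n + 1) := by
    intro n
    rw [hf]
    rw [norm_jacobiTheta₂_term, him, hydef, ← Real.exp_nat_mul, Real.exp_le_exp]
    push_cast
    nlinarith [mul_nonneg (mul_pos pi_pos hτ).le (sq_nonneg ((n : ℝ) + 1))]
  have hR : ‖∑' n : ℕ, f ((n : ℤ) + 1)‖ ≤ y * (1 - y)⁻¹ := geom_tail_bound hy0 hy1 hS1' hb
  intro hcontra
  rw [hsplit, hsplit1] at hcontra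
  have h1 : (1 : ℂ) = -(∑' n : ℕ, f ((n : ℤ) + 1)) := by linear_combination hcontra / 2
  have h2 := congrArg norm h1
  rw [norm_one, norm_neg] at h2
  have h1y : 0 < 1 - y := by linarith
  have hfrac : y / (1 - y) < 1 := by rw [div_lt_one h1y]; linarith
  rw [← div_eq_mul_inv] at hR
  rw [← h2] at hR
  linarith

end ThetaAux

namespace ThetaAux

lemma im_two_mul (τ : ℂ) : (2 * τ).im = 2 * τ.im := by
  simp [Complex.mul_im]

lemma numeric1 {t : ℝ} (ht : 1 ≤ t) : rexp (-π * t) < 1/3 := by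
  have h1 : rexp (-π * t) ≤ rexp (-3) := by
    apply Real.exp_le_exp.mpr
    nlinarith [pi_gt_three]
  have h3 : (3:ℝ) < rexp 3 := by linarith [Real.add_one_le_exp (3:ℝ)]
  have h2 : rexp (-3) < 1/3 := by
    rw [Real.exp_neg]
    rw [show (1:ℝ)/3 = 3⁻¹ by norm_num]
    exact inv_strictAnti₀ (by norm_num) h3
  linarith

lemma numeric2 {t : ℝ} (ht : 1 ≤ t) : rexp (-π * t) < 1/2 := by
  linarith [numeric1 ht]

lemma numeric3 {t : ℝ} (ht : 1 ≤ t) : rexp (-π * t + 2 * π * (t/4)) < 1/3 := by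
  have he : rexp (-π * t + 2 * π * (t/4)) = rexp (-(π/2) * t) := by
    congr 1
    ring
  rw [he]
  have h1 : rexp (-(π/2) * t) ≤ rexp (-(3/2)) := by
    apply Real.exp_le_exp.mpr
    nlinarith [pi_gt_three]
  have hq : (3:ℝ) < rexp (3/2) := by
    have h075 := Real.add_one_le_exp (0.75 : ℝ)
    have : rexp (3/2) = rexp 0.75 * rexp 0.75 := by
      rw [← Real.exp_add]
      norm_num
    nlinarith [Real.exp_pos (0.75 : ℝ)]
  have h2 : rexp (-(3/2)) < 1/3 := by
    rw [show (-(3/2) : ℝ) = -(3/2) by norm_num, Real.exp_neg]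
    rw [show (1:ℝ)/3 = 3⁻¹ by norm_num]
    exact inv_strictAnti₀ (by norm_num) (by norm_num at hq ⊢; linarith)
  linarith

/-- `θ(1/2, τ) ≠ 0` (the θ₄-type nonvanishing). -/
lemma theta_half_ne_zero : ∀ τ : ℂ, 0 < im τ → jacobiTheta₂ (1/2) τ ≠ 0 := by
  have aux : ∀ n : ℕ, ∀ τ : ℂ, 0 < im τ → 1 ≤ 2 ^ n * im τ →
      jacobiTheta₂ (1/2) τ ≠ 0 := by
    intro n
    induction n with
    | zero =>
      intro τ hτ h1
      apply theta_ne_zero_of_bound hτ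
      rw [show ((1:ℂ)/2).im = 0 by simp]
      simp only [abs_zero, mul_zero, add_zero]
      exact numeric1 (by simpa using h1)
    | succ n ih =>
      intro τ hτ h1 hzero
      have h2τ : 0 < im (2 * τ) := by rw [im_two_mul]; linarith
      have h4 := K4 hτ
      rw [hzero, mul_zero] at h4
      have hz2 : jacobiTheta₂ (1/2) (2 * τ) = 0 := by
        rcases mul_eq_zero.mp h4.symm with h | h <;> exact h
      exact ih (2 * τ) h2τ
        (by rw [im_two_mul, show (2:ℝ) ^ n * (2 * τ.im) = 2 ^ (n+1) * τ.im by ring]; exact h1)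
        hz2
  intro τ hτ
  obtain ⟨n, hn⟩ := pow_unbounded_of_one_lt (1/τ.im) (by norm_num : (1:ℝ) < 2)
  exact aux n τ hτ (le_of_lt ((div_lt_iff₀ hτ).mp hn))

/-- `θ(0, τ) ≠ 0`. -/
lemma theta_zero_ne_zero {τ : ℂ} (hτ : 0 < im τ) : jacobiTheta₂ 0 τ ≠ 0 := by
  intro h
  have h2τ : 0 < im (2 * τ) := by rw [im_two_mul]; linarith
  have h4 := K4 hτ
  rw [h, zero_mul] at h4
  rcases mul_eq_zero.mp h4.symm with h' | h' <;>
    exact theta_half_ne_zero (2 * τ) h2τ h'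

/-- `θ(τ/2, τ) ≠ 0`. -/
lemma theta_half_tau_ne_zero : ∀ τ : ℂ, 0 < im τ → jacobiTheta₂ (τ/2) τ ≠ 0 := by
  have aux : ∀ n : ℕ, ∀ τ : ℂ, 0 < im τ → 1 ≤ 2 ^ n * im τ →
      jacobiTheta₂ (τ/2) τ ≠ 0 := by
    intro n
    induction n with
    | zero =>
      intro τ hτ h1
      exact theta_half_tau_ne_zero_of_bound hτ (numeric2 (by simpa using h1))
    | succ n ih =>
      intro τ hτ h1 hzero
      have h2τ : 0 < im (2 * τ) := by rw [im_two_mul]; linarith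
      have h5 := K5 hτ
      rw [hzero, mul_zero] at h5
      have hz2 : jacobiTheta₂ τ (2 * τ) = 0 := by
        rcases mul_eq_zero.mp h5.symm with h | h
        · norm_num at h
        · rcases mul_eq_zero.mp h with h' | h'
          · exact absurd h' (theta_zero_ne_zero h2τ)
          · exact h'
      refine ih (2 * τ) h2τ
        (by rw [im_two_mul, show (2:ℝ) ^ n * (2 * τ.im) = 2 ^ (n+1) * τ.im by ring]; exact h1) ?_
      rw [show (2 * τ) / 2 = τ by ring]
      exact hz2
  intro τ hτ
  obtain ⟨n, hn⟩ := pow_unbounded_of_one_lt (1/τ.im) (by norm_num : (1:ℝ) < 2)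
  exact aux n τ hτ (le_of_lt ((div_lt_iff₀ hτ).mp hn))

/-- `θ(τ, 2τ) ≠ 0` (the θ₂-type nonvanishing). -/
lemma theta_tau_ne_zero {τ : ℂ} (hτ : 0 < im τ) : jacobiTheta₂ τ (2 * τ) ≠ 0 := by
  intro h
  have h5 := K5 hτ
  rw [h, mul_zero, mul_zero] at h5
  rcases mul_eq_zero.mp h5 with h' | h' <;>
    exact theta_half_tau_ne_zero τ hτ h'

end ThetaAux

namespace ThetaAux

/-- The descent step: a common zero of `θ(·,τ)` at `z` and `z - τ/2` gives a common zero
for the doubled parameter. -/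
lemma descent {τ z : ℂ} (hτ : 0 < im τ) (h1 : jacobiTheta₂ z τ = 0)
    (h2 : jacobiTheta₂ (z - τ/2) τ = 0) :
    jacobiTheta₂ (2*z + τ) (2*τ) = 0 ∧ jacobiTheta₂ (2*z) (2*τ) = 0 := by
  have h2τ : 0 < im (2 * τ) := by rw [im_two_mul]; linarith
  set α := jacobiTheta₂ 0 (2*τ) with hα
  set β := jacobiTheta₂ τ (2*τ) with hβ
  set X := jacobiTheta₂ (2*z) (2*τ) with hX
  set Y := jacobiTheta₂ (2*z + τ) (2*τ) with hY
  set q := cexp (π*I*τ) with hq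
  set c := cexp (2*π*I*z) with hc
  -- E1
  have hE1 : 0 = X * α + (q * c) * (Y * β) := by
    have h := theta_mul z z τ hτ
    rw [h1, zero_mul, sub_self, zero_add, show z + z = 2*z by ring] at h
    rw [show (π*I*τ + 2*π*I*z : ℂ) = π*I*τ + 2*π*I*z from rfl] at h
    have hcc : cexp (π*I*τ + 2*π*I*z) = q * c := by
      rw [hq, hc, ← Complex.exp_add]
    rw [hcc] at h
    exact h
  -- quasi-periodicity: θ(2z+τ) = e^{-4πiz} θ(2z-τ)
  have hZ : jacobiTheta₂ (2*z - τ) (2*τ) = (c * c) * Y := by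
    have h := jacobiTheta₂_add_left' (2*z - τ) (2*τ)
    rw [show (2*z - τ) + 2*τ = 2*z + τ by ring] at h
    rw [← hY] at h
    have he : cexp (-↑π * I * (2 * τ + 2 * (2*z - τ))) = (c * c)⁻¹ := by
      rw [hc, ← Complex.exp_add, ← Complex.exp_neg]
      congr 1
      ring
    rw [he] at h
    have hcne : (c * c : ℂ) ≠ 0 := mul_ne_zero (Complex.exp_ne_zero _) (Complex.exp_ne_zero _)
    field_simp at h ⊢
    have hc1 : c ≠ 0 := Complex.exp_ne_zero _
    rw [h]; field_simp
  -- E2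
  have hE2 : 0 = (c * c * Y) * α + c * (X * β) := by
    have h := theta_mul (z - τ/2) (z - τ/2) τ hτ
    rw [h2, zero_mul, sub_self, zero_add,
      show z - τ/2 + (z - τ/2) = 2*z - τ by ring,
      show (2*z - τ + τ : ℂ) = 2*z by ring,
      show (π*I*τ + 2*π*I*(z - τ/2) : ℂ) = 2*π*I*z by ring, hZ] at h
    exact h
  -- the quadratic relation
  have hδ := K3 hτ
  set D := jacobiTheta₂ (1/2) τ with hD
  have hXY0 : (c*c) * (X*Y) * (D*D) = 0 := by
    have hδ' : D * D = α * α - q * (β * β) := hδ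
    linear_combination (c^2*X*Y) * hδ' + (-(c^2*Y*α)) * hE1 + (q*c*Y*β) * hE2
  have hcne : (c : ℂ) ≠ 0 := Complex.exp_ne_zero _
  have hqne : (q : ℂ) ≠ 0 := Complex.exp_ne_zero _
  have hDne : D ≠ 0 := theta_half_ne_zero τ hτ
  have hαne : α ≠ 0 := theta_zero_ne_zero h2τ
  have hβne : β ≠ 0 := theta_tau_ne_zero hτ
  have hXY : X * Y = 0 := by
    rcases mul_eq_zero.mp hXY0 with h | h
    · rcases mul_eq_zero.mp h with h' | h'
      · exact absurd h' (mul_ne_zero hcne hcne)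
      · exact h'
    · exact absurd h (mul_ne_zero hDne hDne)
  have hboth : X = 0 ∧ Y = 0 := by
    rcases mul_eq_zero.mp hXY with h | h
    · refine ⟨h, ?_⟩
      rw [h, zero_mul, zero_add] at hE1
      rcases mul_eq_zero.mp hE1.symm with h' | h'
      · exact absurd h' (mul_ne_zero hqne hcne)
      · rcases mul_eq_zero.mp h' with h'' | h''
        · exact h''
        · exact absurd h'' hβne
    · refine ⟨?_, h⟩
      rw [h, mul_zero, zero_mul, zero_add] at hE2
      rcases mul_eq_zero.mp hE2.symm with h' | h'
      · exact absurd h' hcne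
      · rcases mul_eq_zero.mp h' with h'' | h''
        · exact h''
        · exact absurd h'' hβne
  exact ⟨hboth.2, hboth.1⟩

end ThetaAux

namespace ThetaAux

lemma im_div_two (τ : ℂ) : (τ/2 : ℂ).im = τ.im / 2 := by
  simp [Complex.div_im, Complex.normSq_apply]

lemma im_int_mul (m : ℤ) (w : ℂ) : ((m : ℂ) * w).im = (m : ℝ) * w.im := by
  simp [Complex.mul_im]

/-- Main theorem, theta-function form: `θ(z,τ)` and `θ(z - τ/2, τ)` have no common zero. -/
theorem no_common_zero {τ z : ℂ} (hτ : 0 < im τ) :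
    ¬(jacobiTheta₂ z τ = 0 ∧ jacobiTheta₂ (z - τ/2) τ = 0) := by
  have aux : ∀ n : ℕ, ∀ τ z : ℂ, 0 < im τ → 1 ≤ 2 ^ n * im τ →
      ¬(jacobiTheta₂ z τ = 0 ∧ jacobiTheta₂ (z - τ/2) τ = 0) := by
    intro n
    induction n with
    | zero =>
      intro τ z hτ hbig ⟨h1, h2⟩
      rw [pow_zero, one_mul] at hbig
      -- all half-period shifts vanish
      have hall : ∀ m : ℤ, jacobiTheta₂ (z + m * (τ/2)) τ = 0 := by
        intro m
        rcases Int.even_or_odd m with ⟨k, hk⟩ | ⟨k, hk⟩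
        · have h := theta_zero_shift h1 k
          convert h using 2
          rw [hk]
          push_cast
          ring
        · have h := theta_zero_shift h2 (k + 1)
          convert h using 2
          rw [hk]
          push_cast
          ring
      set t : ℝ := τ.im / 2 with htdef
      have ht : 0 < t := by simp [htdef]; linarith
      set m : ℤ := -round (z.im / t) with hm
      set w : ℂ := z + m * (τ/2) with hw
      have hwim : w.im = z.im + (m : ℝ) * t := by
        rw [hw, Complex.add_im, im_int_mul, im_div_two, htdef]
      have hwb : |w.im| ≤ t / 2 := by
        rw [hwim, hm]
        push_cast
        have h0 := abs_sub_round (z.im / t)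
        have ht' : t ≠ 0 := ne_of_gt ht
        have : z.im + -(round (z.im / t) : ℝ) * t = (z.im / t - round (z.im / t)) * t := by
          field_simp
          ring
        rw [this, abs_mul, abs_of_pos ht]
        calc |z.im / t - (round (z.im / t) : ℝ)| * t ≤ (1/2) * t :=
          mul_le_mul_of_nonneg_right h0 ht.le
        _ = t / 2 := by ring
      have hne := theta_ne_zero_of_bound (z := w) hτ ?_
      · exact hne (hall m)
      · calc rexp (-π * τ.im + 2 * π * |w.im|)
            ≤ rexp (-π * τ.im + 2 * π * (τ.im / 4)) := by
              apply Real.exp_le_exp.mpr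
              have : |w.im| ≤ τ.im / 4 := by
                rw [htdef] at hwb
                linarith
              nlinarith [pi_pos]
        _ < 1/3 := numeric3 hbig
    | succ n ih =>
      intro τ z hτ hbig ⟨h1, h2⟩
      have h2τ : 0 < im (2 * τ) := by rw [im_two_mul]; linarith
      obtain ⟨hd1, hd2⟩ := descent hτ h1 h2
      refine ih (2 * τ) (2 * z + τ) h2τ ?_ ⟨hd1, ?_⟩
      · rw [im_two_mul, show (2:ℝ) ^ n * (2 * τ.im) = 2 ^ (n+1) * τ.im by ring]
        exact hbig
      · rw [show (2*z + τ - (2*τ)/2 : ℂ) = 2*z by ring]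
        exact hd2
  obtain ⟨n, hn⟩ := pow_unbounded_of_one_lt (1/τ.im) (by norm_num : (1:ℝ) < 2)
  exact aux n τ z hτ (le_of_lt ((div_lt_iff₀ hτ).mp hn))

end ThetaAux

/-- `Θ(u,q) = Σ_{l∈ℤ} q^{l²} u^l`. -/
noncomputable def Theta (u q : ℂ) : ℂ := ∑' l : ℤ, q ^ (l ^ 2) * u ^ l

namespace ThetaAux

lemma theta_eq {q u τ z : ℂ} (hq : cexp (π*I*τ) = q) (hu : cexp (2*π*I*z) = u) :
    Theta u q = jacobiTheta₂ z τ := by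
  refine tsum_congr fun l => ?_
  rw [← hq, ← hu, ← Complex.exp_int_mul (π*I*τ) (l^2), ← Complex.exp_int_mul (2*π*I*z) l,
    ← Complex.exp_add]
  simp only [jacobiTheta₂_term]
  congr 1
  push_cast
  ring

/-- Existence of a logarithm with the right properties. -/
lemma exists_tau {q : ℂ} (hq0 : 0 < ‖q‖) (hq1 : ‖q‖ < 1) :
    ∃ τ : ℂ, cexp (π*I*τ) = q ∧ 0 < im τ := by
  have hqne : q ≠ 0 := by
    intro h
    rw [h, norm_zero] at hq0
    exact lt_irrefl _ hq0
  refine ⟨Complex.log q * (-I) / π, ?_, ?_⟩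
  · rw [show (π : ℂ)*I*(Complex.log q * (-I) / π) = Complex.log q by
      have hπ : (π : ℂ) ≠ 0 := Complex.ofReal_ne_zero.mpr Real.pi_ne_zero
      field_simp
      linear_combination (-Complex.log q) * Complex.I_sq]
    exact Complex.exp_log hqne
  · rw [show Complex.log q * (-I) / π = Complex.log q * (-I) / (π : ℝ) by norm_num,
      Complex.div_ofReal_im]
    have him : (Complex.log q * (-I)).im = -(Complex.log q).re := by
      simp [Complex.mul_im]
    rw [him, Complex.log_re]
    have hlog : Real.log ‖q‖ < 0 :=
      Real.log_neg hq0 hq1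
    exact div_pos (by linarith) Real.pi_pos
  
lemma exists_z {u : ℂ} (hu : u ≠ 0) : ∃ z : ℂ, cexp (2*π*I*z) = u := by
  refine ⟨Complex.log u * (-I) / (2*π), ?_⟩
  rw [show (2:ℂ)*π*I*(Complex.log u * (-I) / (2*π)) = Complex.log u by
    have hπ : (π : ℂ) ≠ 0 := Complex.ofReal_ne_zero.mpr Real.pi_ne_zero
    field_simp
    linear_combination (-Complex.log u) * Complex.I_sq]
  exact Complex.exp_log hu

end ThetaAux

open ThetaAux

/-- For `0 < |q| < 1` and `u ≠ 0`, `Θ(u, q)` and `Θ(u/q, q)` are not both zero.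
Consequently, for nonzero `q, q₁, q₂, z` with `q = q₁q₂` and `0 < |q| < 1`, the pair
`(Σ_{l∈ℤ} q^{l²}(q₂z²)^l, Σ_{l∈ℤ} q^{l²}(z²/q₁)^l)` is never `(0,0)`. -/
theorem theta_no_common_zero :
    (∀ q u : ℂ, 0 < ‖q‖ → ‖q‖ < 1 → u ≠ 0 →
      ¬(Theta u q = 0 ∧ Theta (u / q) q = 0)) ∧
    (∀ q q₁ q₂ z : ℂ, q ≠ 0 → q₁ ≠ 0 → q₂ ≠ 0 → z ≠ 0 → q = q₁ * q₂ → 0 < ‖q‖ → ‖q‖ < 1 →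
      ¬((∑' l : ℤ, q ^ (l ^ 2) * (q₂ * z ^ 2) ^ l) = 0 ∧
        (∑' l : ℤ, q ^ (l ^ 2) * (z ^ 2 / q₁) ^ l) = 0)) := by
  have part1 : ∀ q u : ℂ, 0 < ‖q‖ → ‖q‖ < 1 → u ≠ 0 →
      ¬(Theta u q = 0 ∧ Theta (u / q) q = 0) := by
    intro q u hq0 hq1 hu ⟨H1, H2⟩
    obtain ⟨τ, hqτ, hτim⟩ := exists_tau hq0 hq1
    obtain ⟨z, huz⟩ := exists_z hu
    have hqne : q ≠ 0 := by
      intro h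
      rw [h, norm_zero] at hq0
      exact lt_irrefl _ hq0
    have hbr1 : Theta u q = jacobiTheta₂ z τ := theta_eq hqτ huz
    have hbr2 : Theta (u / q) q = jacobiTheta₂ (z - τ/2) τ := by
      refine theta_eq hqτ ?_
      rw [show (2:ℂ)*π*I*(z - τ/2) = 2*π*I*z - π*I*τ by ring, Complex.exp_sub, huz, hqτ]
    exact no_common_zero hτim ⟨hbr1 ▸ H1, hbr2 ▸ H2⟩
  refine ⟨part1, ?_⟩
  intro q q₁ q₂ z hq hq₁ hq₂ hz hfac hn0 hn1 ⟨H1, H2⟩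
  have hu : q₂ * z ^ 2 ≠ 0 := mul_ne_zero hq₂ (pow_ne_zero 2 hz)
  apply part1 q (q₂ * z ^ 2) hn0 hn1 hu
  constructor
  · exact H1
  · have : (q₂ * z ^ 2) / q = z ^ 2 / q₁ := by
      rw [hfac]
      field_simp
    show Theta ((q₂ * z ^ 2) / q) q = 0
    rw [show Theta ((q₂ * z ^ 2) / q) q = ∑' l : ℤ, q ^ (l ^ 2) * ((q₂ * z ^ 2) / q) ^ l from rfl,
      this]
    exact H2
end

section
/- Let T = [[1,1],[0,1]] ∈ SL₂(ℤ), and let M₁, …, M_k ∈ SL₂(ℤ) be matrices each of which is conjugate in SL₂(ℤ) to T. If M₁·M₂·⋯·M_k equals the identity matrix, then 12 divides k. -/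
/-- Explicit formula for the abelianization map `SL₂(ℤ/3) → ℤ/3`. -/
private def tpGThree (a b c d : ZMod 3) : ZMod 3 := a*c + b*d + c*d + 2*b*c^2*d

/-- Explicit formula for the abelianization map `SL₂(ℤ/4) → ℤ/4`. -/
private def tpGFour (a b c d : ZMod 4) : ZMod 4 :=
  1 + 3*d + 2*c + b*d + b*c + b*c*d + b*c^2 + a*c

private lemma tpGThree_mul : ∀ a b c d a' b' c' d' : ZMod 3,
    a*d - b*c = 1 → a'*d' - b'*c' = 1 →
    tpGThree (a*a'+b*c') (a*b'+b*d') (c*a'+d*c') (c*b'+d*d')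
      = tpGThree a b c d + tpGThree a' b' c' d' := by decide

set_option maxHeartbeats 8000000 in
private lemma tpGFour_mul : ∀ a b c d a' b' c' d' : ZMod 4,
    a*d - b*c = 1 → a'*d' - b'*c' = 1 →
    tpGFour (a*a'+b*c') (a*b'+b*d') (c*a'+d*c') (c*b'+d*d')
      = tpGFour a b c d + tpGFour a' b' c' d' := by decide

private def tpPhiThree :
    Matrix.SpecialLinearGroup (Fin 2) (ZMod 3) →* Multiplicative (ZMod 3) where
  toFun g := Multiplicative.ofAdd (tpGThree (g.1 0 0) (g.1 0 1) (g.1 1 0) (g.1 1 1))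
  map_one' := by decide
  map_mul' A B := by
    have hA := A.2; have hB := B.2
    rw [Matrix.det_fin_two] at hA hB
    have key := tpGThree_mul (A.1 0 0) (A.1 0 1) (A.1 1 0) (A.1 1 1)
      (B.1 0 0) (B.1 0 1) (B.1 1 0) (B.1 1 1) hA hB
    simp only [Matrix.SpecialLinearGroup.coe_mul, Matrix.mul_apply, Fin.sum_univ_two]
    rw [key]
    rfl

private def tpPhiFour :
    Matrix.SpecialLinearGroup (Fin 2) (ZMod 4) →* Multiplicative (ZMod 4) where
  toFun g := Multiplicative.ofAdd (tpGFour (g.1 0 0) (g.1 0 1) (g.1 1 0) (g.1 1 1))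
  map_one' := by decide
  map_mul' A B := by
    have hA := A.2; have hB := B.2
    rw [Matrix.det_fin_two] at hA hB
    have key := tpGFour_mul (A.1 0 0) (A.1 0 1) (A.1 1 0) (A.1 1 1)
      (B.1 0 0) (B.1 0 1) (B.1 1 0) (B.1 1 1) hA hB
    simp only [Matrix.SpecialLinearGroup.coe_mul, Matrix.mul_apply, Fin.sum_univ_two]
    rw [key]
    rfl

/-- If a character of `SL₂(ℤ)` valued in `ℤ/n` sends `T` to `1`, and a product of
conjugates of `T` is trivial, then `n` divides the number of factors. -/
private lemma tpDvd {n : ℕ} [NeZero n]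
    (φ : Matrix.SpecialLinearGroup (Fin 2) ℤ →* Multiplicative (ZMod n))
    (k : ℕ) (M : Fin k → Matrix.SpecialLinearGroup (Fin 2) ℤ)
    (T : Matrix.SpecialLinearGroup (Fin 2) ℤ)
    (hφT : φ T = Multiplicative.ofAdd 1)
    (hM : ∀ i, IsConj T (M i))
    (hprod : (List.ofFn M).prod = 1) : n ∣ k := by
  have hconst : ∀ x ∈ (List.ofFn M).map φ, x = φ T := by
    intro x hx
    simp only [List.mem_map, List.mem_ofFn] at hx
    obtain ⟨y, ⟨i, rfl⟩, rfl⟩ := hx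
    obtain ⟨c, hc⟩ := hM i
    have h : φ c * φ T = φ (M i) * φ c := by
      rw [← map_mul, ← map_mul, hc.eq]
    rw [mul_comm (φ c) (φ T)] at h
    exact (mul_right_cancel h).symm
  have h1 : (φ T) ^ k = 1 := by
    have hp := List.prod_eq_pow_card ((List.ofFn M).map φ) (φ T) hconst
    rw [← map_list_prod, hprod, map_one, List.length_map, List.length_ofFn] at hp
    exact hp.symm
  rw [hφT] at h1
  have h2 : ((k : ℕ) : ZMod n) = 0 := by
    have := congrArg Multiplicative.toAdd h1
    simpa [← ofAdd_nsmul, nsmul_eq_mul] using this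
  exact (ZMod.natCast_eq_zero_iff k n).mp h2

/-- The '12 property': if `M₁, …, M_k ∈ SL₂(ℤ)` are each conjugate in `SL₂(ℤ)` to
`T = [[1,1],[0,1]]` and `M₁·M₂·⋯·M_k = 1`, then `12 ∣ k`. -/
theorem twelve_property (k : ℕ) (M : Fin k → Matrix.SpecialLinearGroup (Fin 2) ℤ)
    (T : Matrix.SpecialLinearGroup (Fin 2) ℤ)
    (hT : (T : Matrix (Fin 2) (Fin 2) ℤ) = !![1, 1; 0, 1])
    (hM : ∀ i, IsConj T (M i))
    (hprod : (List.ofFn M).prod = 1) : 12 ∣ k := by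
  have h3 : (3 : ℕ) ∣ k := by
    refine tpDvd (tpPhiThree.comp
      (Matrix.SpecialLinearGroup.map (Int.castRingHom (ZMod 3)))) k M T ?_ hM hprod
    show Multiplicative.ofAdd (tpGThree _ _ _ _) = Multiplicative.ofAdd 1
    simp [Matrix.SpecialLinearGroup.map_apply_coe, hT, Matrix.map_apply]
    decide
  have h4 : (4 : ℕ) ∣ k := by
    refine tpDvd (tpPhiFour.comp
      (Matrix.SpecialLinearGroup.map (Int.castRingHom (ZMod 4)))) k M T ?_ hM hprod
    show Multiplicative.ofAdd (tpGFour _ _ _ _) = Multiplicative.ofAdd 1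
    simp [Matrix.SpecialLinearGroup.map_apply_coe, hT, Matrix.map_apply]
    decide
  omega
end
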